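/- arXiv:2008.03491 — 6 statements merged into one kernel-verified Lean document; each statement's English description precedes it below -/
import Mathlib

section
/- Let ρ ∈ ℝ, ρ ≠ 0. If [Tx,Tx]_K + ρ·[Vx,Vx]_E ≥ 0 for every x ∈ H (i.e. R(L) is nonnegative with respect to [·,·]_ρ), then T(ker V) is a positive subspace of K, i.e. [y,y]_K > 0 for every nonzero y ∈ T(ker V); in particular T(ker V) is nondegenerate. If moreover R(L) is closed in K×E, then T(ker V) is closed in K. -/
open scoped ComplexInnerProductSpace Pointwise

noncomputable section

variable {H K E : Type*}
  [NormedAddCommGroup H] [InnerProductSpace ℂ H] [CompleteSpace H]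
  [NormedAddCommGroup K] [InnerProductSpace ℂ K] [CompleteSpace K]
  [NormedAddCommGroup E] [InnerProductSpace ℂ E] [CompleteSpace E]

/-- The operator `T^#T + ρ·V^#V = T*∘J_K∘T + ρ·V*∘J_E∘V` on `H`. -/
def smOp (JK : K →L[ℂ] K) (JE : E →L[ℂ] E) (T : H →L[ℂ] K) (V : H →L[ℂ] E) (ρ : ℝ) :
    H →L[ℂ] H :=
  (ContinuousLinearMap.adjoint T) ∘L JK ∘L T +
    (ρ : ℂ) • ((ContinuousLinearMap.adjoint V) ∘L JE ∘L V)

/-- An operator on `H` is positive semidefinite if its quadratic form `⟨Ax,x⟩` is real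
and nonnegative for every `x`. -/
def IsPosSemidef (A : H →L[ℂ] H) : Prop :=
  ∀ x : H, (⟪A x, x⟫).im = 0 ∧ 0 ≤ (⟪A x, x⟫).re

/-- `sm(ρ,z₀)`: the set of global minimizers of
`F_ρ(x) = [Tx,Tx]_K + ρ·[Vx−z₀,Vx−z₀]_E` over `H`. -/
def smSet (JK : K →L[ℂ] K) (JE : E →L[ℂ] E) (T : H →L[ℂ] K) (V : H →L[ℂ] E) (ρ : ℝ)
    (z₀ : E) : Set H :=
  {xt : H | ∀ x : H,
    (⟪JK (T xt), T xt⟫).re + ρ * (⟪JE (V xt - z₀), V xt - z₀⟫).re ≤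
      (⟪JK (T x), T x⟫).re + ρ * (⟪JE (V x - z₀), V x - z₀⟫).re}

/-- `sp(w₀)`: the set of minimizers of `x ↦ [Tx,Tx]_K` subject to `Vx = w₀`. -/
def spSet (JK : K →L[ℂ] K) (T : H →L[ℂ] K) (V : H →L[ℂ] E) (w₀ : E) : Set H :=
  {xt : H | V xt = w₀ ∧ ∀ x : H, V x = w₀ →
    (⟪JK (T xt), T xt⟫).re ≤ (⟪JK (T x), T x⟫).re}

/-- `R(L)^[⊥]`: the `[·,·]_ρ`-orthogonal companion of the range of `L = (T,V)`. -/
def RLperp (JK : K →L[ℂ] K) (JE : E →L[ℂ] E) (T : H →L[ℂ] K) (V : H →L[ℂ] E) (ρ : ℝ) :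
    Set (K × E) :=
  {p : K × E | ∀ x : H, ⟪JK (T x), p.1⟫ + (ρ : ℂ) * ⟪JE (V x), p.2⟫ = 0}

/-- `N₀ = ker V ∩ ((T^#T)(ker V))^⊥`. -/
def N0 (JK : K →L[ℂ] K) (T : H →L[ℂ] K) (V : H →L[ℂ] E) : Submodule ℂ H :=
  LinearMap.ker (V : H →ₗ[ℂ] E) ⊓
    (Submodule.map (((ContinuousLinearMap.adjoint T) ∘L JK ∘L T : H →L[ℂ] H) : H →ₗ[ℂ] H)
      (LinearMap.ker (V : H →ₗ[ℂ] E)))ᗮ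

lemma quadZero (a b : ℝ) (h : ∀ t : ℝ, 0 ≤ 2*(t*b) + t^2*a) : b = 0 := by
  by_contra hb
  have ha : (0:ℝ) < |a| + 1 := by positivity
  have h1 := h (-b/(|a|+1))
  have h2 : (-b/(|a|+1)) * (|a|+1) + b = 0 := by field_simp; ring
  have haa : a ≤ |a| := le_abs_self a
  have hbb : 0 < b^2 := by positivity
  set t := -b/(|a|+1)
  have key : -2*b^2*(|a|+1) + b^2*a = (2*(t*b) + t^2*a) * (|a|+1)^2 := by
    linear_combination (-2*b*(|a|+1) + a*(b - t*(|a|+1))) * h2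
  nlinarith [mul_nonneg h1 (sq_nonneg (|a|+1))]

theorem stmt14
    (JK : K →L[ℂ] K) (hJKsa : IsSelfAdjoint JK) (hJK2 : JK ∘L JK = 1)
    (JE : E →L[ℂ] E) (hJEsa : IsSelfAdjoint JE) (hJE2 : JE ∘L JE = 1)
    (T : H →L[ℂ] K) (V : H →L[ℂ] E)
    (hT : Function.Surjective T) (hV : Function.Surjective V)
    (ρ : ℝ) (hρ : ρ ≠ 0)
    (hnn : ∀ x : H, 0 ≤ (⟪JK (T x), T x⟫).re + ρ * (⟪JE (V x), V x⟫).re) :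
    (∀ y ∈ T '' (LinearMap.ker (V : H →ₗ[ℂ] E) : Set H), y ≠ 0 → 0 < (⟪JK y, y⟫).re) ∧
    (∀ y ∈ T '' (LinearMap.ker (V : H →ₗ[ℂ] E) : Set H),
      (∀ u : H, V u = 0 → ⟪JK y, T u⟫ = 0) → y = 0) ∧
    (IsClosed (Set.range (fun x : H => (T x, V x))) →
      IsClosed (T '' (LinearMap.ker (V : H →ₗ[ℂ] E) : Set H))) := by
  have hsw : ∀ a b : K, ⟪JK a, b⟫ = ⟪a, JK b⟫ := by
    intro a b
    rw [← ContinuousLinearMap.adjoint_inner_left, hJKsa.adjoint_eq]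
  have hpos : ∀ y ∈ T '' (LinearMap.ker (V : H →ₗ[ℂ] E) : Set H), y ≠ 0 → 0 < (⟪JK y, y⟫).re := by
    rintro y ⟨x₀, hx₀, rfl⟩ hy0
    have hVx₀ : V x₀ = 0 := hx₀
    have hnn0 : 0 ≤ (⟪JK (T x₀), T x₀⟫).re := by
      have := hnn x₀; simpa [hVx₀] using this
    rcases hnn0.lt_or_eq with h | h
    · exact h
    exfalso
    have hre : (⟪JK (T x₀), T x₀⟫).re = 0 := h.symm
    have key : ∀ u : H, ⟪JK (T x₀), T u⟫ = 0 := by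
      intro u
      set w : ℂ := ⟪JK (T x₀), T u⟫ with hw
      set a : ℝ := (⟪JK (T u), T u⟫).re + ρ * (⟪JE (V u), V u⟫).re with haa
      have hexp : ∀ c : ℂ, 0 ≤ 2*((c*w).re) + Complex.normSq c * a := by
        intro c
        have h1 := hnn (x₀ + c • u)
        have hTc : T (x₀ + c • u) = T x₀ + c • T u := by simp
        have hVc : V (x₀ + c • u) = c • V u := by simp [hVx₀]
        rw [hTc, hVc] at h1
        have hba : ⟪JK (T u), T x₀⟫ = (starRingEnd ℂ) w := by
          rw [hsw, ← inner_conj_symm]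
        have e1 : ⟪JK (T x₀ + c • T u), T x₀ + c • T u⟫
            = ⟪JK (T x₀), T x₀⟫ + (c * w + (starRingEnd ℂ) (c * w))
              + (Complex.normSq c : ℂ) * ⟪JK (T u), T u⟫ := by
          simp only [map_add, map_smul, inner_add_left, inner_add_right,
            inner_smul_left, inner_smul_right, hba, ← hw]
          rw [Complex.normSq_eq_conj_mul_self, map_mul]
          ring
        have e2 : ⟪JE (c • V u), c • V u⟫ = (Complex.normSq c : ℂ) * ⟪JE (V u), V u⟫ := by
          simp only [map_smul, inner_smul_left, inner_smul_right]
          rw [Complex.normSq_eq_conj_mul_self]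
          ring
        rw [e1, e2] at h1
        simp only [Complex.add_re, Complex.re_ofReal_mul, Complex.conj_re] at h1
        rw [hre] at h1
        rw [haa]
        ring_nf
        ring_nf at h1
        linarith
      have hwre : w.re = 0 := by
        apply quadZero a
        intro t
        have := hexp (t : ℂ)
        simpa [Complex.re_ofReal_mul, Complex.normSq_ofReal, sq] using this
      have hwim : w.im = 0 := by
        have h' : -w.im = 0 := by
          apply quadZero a
          intro t
          have := hexp ((t : ℂ) * Complex.I)
          have hre' : (((t:ℂ) * Complex.I) * w).re = t * (-w.im) := by
            rw [mul_assoc, Complex.re_ofReal_mul, Complex.I_mul_re]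
          have hns : Complex.normSq ((t:ℂ) * Complex.I) = t^2 := by
            simp [Complex.normSq_mul, Complex.normSq_ofReal, sq]
          rw [hre', hns] at this
          exact this
        linarith
      rw [hw] at *
      exact Complex.ext hwre hwim
    obtain ⟨u, hu⟩ := hT (JK (T x₀))
    have h0 : ⟪JK (T x₀), JK (T x₀)⟫ = 0 := by
      have h0' := key u; rw [hu] at h0'; exact h0'
    have hJy : JK (T x₀) = 0 := inner_self_eq_zero.mp h0
    apply hy0
    have h2 : JK (JK (T x₀)) = T x₀ := by
      have := congrArg (fun f : K →L[ℂ] K => f (T x₀)) hJK2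
      simpa using this
    rw [← h2, hJy, map_zero]
  refine ⟨hpos, ?_, ?_⟩
  · rintro y hy hperp
    by_contra hne
    obtain ⟨x₀, hx₀, rfl⟩ := hy
    have hVx₀ : V x₀ = 0 := hx₀
    have h1 := hperp x₀ hVx₀
    have h2 := hpos (T x₀) ⟨x₀, hx₀, rfl⟩ hne
    rw [h1] at h2
    simp at h2
  · intro hclosed
    have heq : T '' (LinearMap.ker (V : H →ₗ[ℂ] E) : Set H)
        = (fun k : K => (k, (0 : E))) ⁻¹' (Set.range fun x : H => (T x, V x)) := by
      ext k
      simp only [Set.mem_image, Set.mem_preimage, Set.mem_range, Prod.mk.injEq,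
        SetLike.mem_coe, LinearMap.mem_ker]
      constructor
      · rintro ⟨x, hx1, rfl⟩; exact ⟨x, rfl, hx1⟩
      · rintro ⟨x, h1, h2⟩; exact ⟨x, h2, h1⟩
    rw [heq]
    exact hclosed.preimage (continuous_id.prodMk continuous_const)
end
end

section
/- Let ρ ∈ ℝ, ρ ≠ 0. If R(L) is closed in K×E, [Tx,Tx]_K + ρ·[Vx,Vx]_E ≥ 0 for every x ∈ H, and R(L) + R(L)^[⊥] is closed in K×E (i.e. R(L) is a nonnegative pseudo-regular subspace for [·,·]_ρ), then T(ker V) is a closed, uniformly positive subspace of K: it is closed and there exists α > 0 such that [y,y]_K ≥ α·‖y‖² for every y ∈ T(ker V). -/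
open scoped ComplexInnerProductSpace Pointwise

noncomputable section

variable {H K E : Type*}
  [NormedAddCommGroup H] [InnerProductSpace ℂ H] [CompleteSpace H]
  [NormedAddCommGroup K] [InnerProductSpace ℂ K] [CompleteSpace K]
  [NormedAddCommGroup E] [InnerProductSpace ℂ E] [CompleteSpace E]

lemma cs_aux {S : Type*} [NormedAddCommGroup S] [InnerProductSpace ℂ S]
    (G : S →L[ℂ] S) (hsym : ∀ σ τ : S, ⟪G σ, τ⟫ = ⟪σ, G τ⟫)
    (hpos : ∀ σ : S, 0 ≤ (⟪G σ, σ⟫).re) (σ τ : S) :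
    ‖⟪G σ, τ⟫‖ ^ 2 ≤ (⟪G σ, σ⟫).re * (⟪G τ, τ⟫).re := by
  by_cases hz : ⟪G σ, τ⟫ = 0
  · rw [hz]; simpa using mul_nonneg (hpos σ) (hpos τ)
  · set z : ℂ := ⟪G σ, τ⟫ with hzdef
    set c₀ : ℂ := (‖z‖ : ℂ) / z with hc₀def
    have hc₀z : c₀ * z = (‖z‖ : ℂ) := div_mul_cancel₀ _ hz
    have hnc₀ : ‖c₀‖ = 1 := by
      rw [hc₀def, norm_div, Complex.norm_real, Real.norm_eq_abs, abs_of_nonneg (norm_nonneg z),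
        div_self (norm_ne_zero_iff.mpr hz)]
    have hτσ : ⟪G τ, σ⟫ = starRingEnd ℂ z := by
      rw [hsym τ σ, hzdef, ← inner_conj_symm]
    have hquad : ∀ t : ℝ, 0 ≤ (⟪G τ, τ⟫).re * (t * t) + (2 * ‖z‖) * t + (⟪G σ, σ⟫).re := by
      intro t
      set a : ℂ := (t : ℂ) * c₀ with hadef
      have ha : ⟪G (σ + a • τ), σ + a • τ⟫
          = ⟪G σ, σ⟫ + a * z + starRingEnd ℂ (a * z) + starRingEnd ℂ a * a * ⟪G τ, τ⟫ := by
        rw [map_add, map_smul]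
        simp only [inner_add_left, inner_add_right, inner_smul_left, inner_smul_right, hτσ,
          ← hzdef, map_mul]
        ring
      have h1 : a * z = ((t * ‖z‖ : ℝ) : ℂ) := by
        rw [hadef, mul_assoc, hc₀z]; push_cast; ring
      have h2 : starRingEnd ℂ a * a = ((t ^ 2 : ℝ) : ℂ) := by
        have h3 : starRingEnd ℂ a * a = ((‖a‖ ^ 2 : ℝ) : ℂ) := by
          rw [mul_comm, Complex.mul_conj']
          norm_cast
        rw [h3]
        norm_cast
        rw [hadef, norm_mul, hnc₀, mul_one, Complex.norm_real, Real.norm_eq_abs, sq_abs]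
      have h0 := hpos (σ + a • τ)
      rw [ha] at h0
      simp only [h1, h2, Complex.add_re, Complex.ofReal_re, Complex.re_ofReal_mul,
        Complex.conj_ofReal] at h0
      nlinarith [h0]
    have hd := discrim_le_zero hquad
    rw [discrim] at hd
    nlinarith [hd, norm_nonneg z]

set_option maxHeartbeats 2000000 in
theorem stmt15
    (JK : K →L[ℂ] K) (hJKsa : IsSelfAdjoint JK) (hJK2 : JK ∘L JK = 1)
    (JE : E →L[ℂ] E) (hJEsa : IsSelfAdjoint JE) (hJE2 : JE ∘L JE = 1)
    (T : H →L[ℂ] K) (V : H →L[ℂ] E)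
    (hT : Function.Surjective T) (hV : Function.Surjective V)
    (ρ : ℝ) (hρ : ρ ≠ 0)
    (hclosedR : IsClosed (Set.range (fun x : H => (T x, V x))))
    (hnn : ∀ x : H, 0 ≤ (⟪JK (T x), T x⟫).re + ρ * (⟪JE (V x), V x⟫).re)
    (hpr : IsClosed (Set.range (fun x : H => (T x, V x)) + RLperp JK JE T V ρ)) :
    IsClosed (T '' (LinearMap.ker (V : H →ₗ[ℂ] E) : Set H)) ∧
    ∃ α : ℝ, 0 < α ∧ ∀ y ∈ T '' (LinearMap.ker (V : H →ₗ[ℂ] E) : Set H),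
      α * ‖y‖ ^ 2 ≤ (⟪JK y, y⟫).re := by
  classical
  -- Part 1 : closedness of T(ker V)
  have him : T '' (LinearMap.ker (V : H →ₗ[ℂ] E) : Set H)
      = (fun y : K => (y, (0 : E))) ⁻¹' (Set.range (fun x : H => (T x, V x))) := by
    ext y
    constructor
    · rintro ⟨x, hx, rfl⟩
      have hVx : V x = 0 := hx
      exact ⟨x, by show (T x, V x) = (T x, 0); rw [hVx]⟩
    · rintro ⟨x, hx⟩
      have h1 : T x = y := congrArg Prod.fst hx
      have h2 : V x = 0 := congrArg Prod.snd hx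
      exact ⟨x, h2, h1⟩
  have hclosed1 : IsClosed (T '' (LinearMap.ker (V : H →ₗ[ℂ] E) : Set H)) := by
    rw [him]
    exact hclosedR.preimage (continuous_id.prodMk continuous_const)
  refine ⟨hclosed1, ?_⟩
  -- basic facts about the symmetries
  have hJKsym : ∀ u v : K, ⟪JK u, v⟫ = ⟪u, JK v⟫ := fun u v =>
    ContinuousLinearMap.isSelfAdjoint_iff_isSymmetric.mp hJKsa u v
  have hJEsym : ∀ u v : E, ⟪JE u, v⟫ = ⟪u, JE v⟫ := fun u v =>
    ContinuousLinearMap.isSelfAdjoint_iff_isSymmetric.mp hJEsa u v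
  have hJK2' : ∀ u, JK (JK u) = u := fun u => by
    have := DFunLike.congr_fun hJK2 u
    simpa using this
  have hJE2' : ∀ u, JE (JE u) = u := fun u => by
    have := DFunLike.congr_fun hJE2 u
    simpa using this
  have hJKnorm : ∀ u, ‖JK u‖ = ‖u‖ := by
    intro u
    have h1 : ⟪JK u, JK u⟫ = ⟪u, u⟫ := by rw [hJKsym, hJK2']
    have h2 : ‖JK u‖ ^ 2 = ‖u‖ ^ 2 := by
      rw [← inner_self_eq_norm_sq (𝕜 := ℂ), ← inner_self_eq_norm_sq (𝕜 := ℂ), h1]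
    have := norm_nonneg (JK u); have := norm_nonneg u
    nlinarith
  -- open mapping constant for T
  obtain ⟨CT, hCT0, hCT⟩ := T.exists_preimage_norm_le hT
  -- the ambient Krein space W = K ×₂ E
  let e : WithLp 2 (K × E) ≃L[ℂ] (K × E) := WithLp.prodContinuousLinearEquiv 2 ℂ K E
  let L : H →L[ℂ] WithLp 2 (K × E) := (e.symm : (K × E) →L[ℂ] WithLp 2 (K × E)) ∘L (T.prod V)
  let J : WithLp 2 (K × E) →L[ℂ] WithLp 2 (K × E) :=
    (e.symm : (K × E) →L[ℂ] WithLp 2 (K × E)) ∘L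
      ((JK.prodMap ((ρ : ℂ) • JE)) ∘L (e : WithLp 2 (K × E) →L[ℂ] (K × E)))
  have hJinner : ∀ (u v : WithLp 2 (K × E)),
      ⟪J u, v⟫ = ⟪JK u.fst, v.fst⟫ + (ρ : ℂ) * ⟪JE u.snd, v.snd⟫ := by
    intro u v
    rw [WithLp.prod_inner_apply]
    show ⟪JK u.fst, v.fst⟫ + ⟪(ρ : ℂ) • JE u.snd, v.snd⟫ = _
    rw [inner_smul_left, Complex.conj_ofReal]
  have hJsym : ∀ u v : WithLp 2 (K × E), ⟪J u, v⟫ = ⟪u, J v⟫ := by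
    intro u v
    rw [hJinner, WithLp.prod_inner_apply]
    show _ = ⟪u.fst, JK v.fst⟫ + ⟪u.snd, (ρ : ℂ) • JE v.snd⟫
    rw [inner_smul_right, hJKsym u.fst v.fst, hJEsym u.snd v.snd]
  -- S = range L is a closed subspace
  let S : Submodule ℂ (WithLp 2 (K × E)) := LinearMap.range (L : H →ₗ[ℂ] WithLp 2 (K × E))
  have hScoe : (S : Set (WithLp 2 (K × E)))
      = (e : WithLp 2 (K × E) → (K × E)) ⁻¹' (Set.range (fun x : H => (T x, V x))) := by
    ext w
    constructor
    · rintro ⟨x, rfl⟩; exact ⟨x, rfl⟩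
    · rintro ⟨x, hx⟩
      have hx' : (T x, V x) = e w := hx
      exact ⟨x, by rw [show (L : H →ₗ[ℂ] WithLp 2 (K × E)) x = e.symm (T x, V x) from rfl, hx', e.symm_apply_apply]⟩
  have hSclosed : IsClosed (S : Set (WithLp 2 (K × E))) := by
    rw [hScoe]; exact hclosedR.preimage e.continuous
  haveI : CompleteSpace S := hSclosed.completeSpace_coe
  -- the compressed Gram operator G
  let G : S →L[ℂ] S := (S.orthogonalProjectionOnto) ∘L (J ∘L S.subtypeL)
  have hGcoe : ∀ σ : S, (G σ : WithLp 2 (K × E))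
      = S.starProjection (J ↑σ) := fun _ => rfl
  have hGinner : ∀ σ τ : S, ⟪G σ, τ⟫ = ⟪J ↑σ, (↑τ : WithLp 2 (K × E))⟫ := by
    intro σ τ
    have h := Submodule.starProjection_inner_eq_zero (K := S) (J ↑σ) ↑τ τ.2
    rw [inner_sub_left, sub_eq_zero] at h
    rw [Submodule.coe_inner, hGcoe, ← h]
  have hGsym : ∀ σ τ : S, ⟪G σ, τ⟫ = ⟪σ, G τ⟫ := by
    intro σ τ
    calc ⟪G σ, τ⟫ = ⟪J ↑σ, (↑τ : WithLp 2 (K × E))⟫ := hGinner σ τ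
      _ = ⟪(↑σ : WithLp 2 (K × E)), J ↑τ⟫ := hJsym _ _
      _ = starRingEnd ℂ ⟪J ↑τ, (↑σ : WithLp 2 (K × E))⟫ := (inner_conj_symm _ _).symm
      _ = starRingEnd ℂ ⟪G τ, σ⟫ := by rw [hGinner]
      _ = ⟪σ, G τ⟫ := inner_conj_symm (𝕜 := ℂ) (E := S) σ (G τ)
  have hGpos : ∀ σ : S, 0 ≤ (⟪G σ, σ⟫).re := by
    intro σ
    obtain ⟨x, hx⟩ := σ.2
    rw [hGinner, ← hx, hJinner]
    have hc : (((L : H →ₗ[ℂ] WithLp 2 (K × E)) x).fst = T x ∧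
        ((L : H →ₗ[ℂ] WithLp 2 (K × E)) x).snd = V x) := ⟨rfl, rfl⟩
    rw [hc.1, hc.2, Complex.add_re, Complex.re_ofReal_mul]
    exact hnn x
  -- uniform bound on the kernel of G : `‖T x‖ ≤ c₁ ‖V x‖`
  set c₁ : ℝ := |ρ| * ‖JE‖ * ‖V‖ * CT with hc₁def
  have hc₁0 : 0 ≤ c₁ := by positivity
  have hkerG : ∀ σ : S, G σ = 0 → ∀ x : H, L x = ↑σ → ‖T x‖ ≤ c₁ * ‖V x‖ := by
    intro σ h0 x hx
    have horto : ∀ x' : H, ⟪JK (T x), T x'⟫ + (ρ : ℂ) * ⟪JE (V x), V x'⟫ = 0 := by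
      intro x'
      have h1 : ⟪G σ, (⟨L x', ⟨x', rfl⟩⟩ : S)⟫ = 0 := by rw [h0, inner_zero_left]
      rw [hGinner, ← hx, hJinner] at h1
      exact h1
    obtain ⟨x', hx'1, hx'2⟩ := hCT (JK (T x))
    have h2 := horto x'
    rw [hx'1] at h2
    have h3 : ⟪JK (T x), JK (T x)⟫ = ((‖T x‖ ^ 2 : ℝ) : ℂ) := by
      rw [inner_self_eq_norm_sq_to_K, hJKnorm]
      norm_cast
    rw [h3] at h2
    have h4 : ((‖T x‖ ^ 2 : ℝ) : ℂ) = -((ρ : ℂ) * ⟪JE (V x), V x'⟫) :=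
      eq_neg_of_add_eq_zero_left h2
    have h5 : ‖T x‖ * ‖T x‖ ≤ (c₁ * ‖V x‖) * ‖T x‖ := by
      have e1 : ‖T x‖ ^ 2 = ‖((‖T x‖ ^ 2 : ℝ) : ℂ)‖ := by
        rw [Complex.norm_real, Real.norm_eq_abs, abs_of_nonneg (by positivity)]
      have e2 : ‖((‖T x‖ ^ 2 : ℝ) : ℂ)‖ = ‖(ρ : ℂ)‖ * ‖⟪JE (V x), V x'⟫‖ := by
        rw [h4, norm_neg, norm_mul]
      have e3 : ‖⟪JE (V x), V x'⟫‖ ≤ ‖JE (V x)‖ * ‖V x'‖ := norm_inner_le_norm _ _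
      have e4 : ‖JE (V x)‖ ≤ ‖JE‖ * ‖V x‖ := JE.le_opNorm _
      have e5 : ‖V x'‖ ≤ ‖V‖ * (CT * ‖T x‖) := by
        calc ‖V x'‖ ≤ ‖V‖ * ‖x'‖ := V.le_opNorm _
          _ ≤ ‖V‖ * (CT * ‖JK (T x)‖) := by
              exact mul_le_mul_of_nonneg_left hx'2 (norm_nonneg V)
          _ = ‖V‖ * (CT * ‖T x‖) := by rw [hJKnorm]
      have e6 : ‖(ρ : ℂ)‖ = |ρ| := by rw [Complex.norm_real, Real.norm_eq_abs]
      have hTx2 : ‖T x‖ ^ 2 ≤ |ρ| * (‖JE‖ * ‖V x‖ * (‖V‖ * (CT * ‖T x‖))) := by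
        rw [e1, e2, e6]
        have := norm_nonneg (⟪JE (V x), V x'⟫ : ℂ)
        have h7 : ‖⟪JE (V x), V x'⟫‖ ≤ ‖JE‖ * ‖V x‖ * (‖V‖ * (CT * ‖T x‖)) := by
          calc ‖⟪JE (V x), V x'⟫‖ ≤ ‖JE (V x)‖ * ‖V x'‖ := e3
            _ ≤ (‖JE‖ * ‖V x‖) * (‖V‖ * (CT * ‖T x‖)) := by
                apply mul_le_mul e4 e5 (norm_nonneg _) (by positivity)
        exact mul_le_mul_of_nonneg_left h7 (abs_nonneg ρ)
      rw [hc₁def]; nlinarith [hTx2]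
    rcases eq_or_lt_of_le (norm_nonneg (T x)) with h8 | h8
    · rw [← h8]; positivity
    · exact le_of_mul_le_mul_right h5 h8
  -- pseudo-regularity ⟹ range of G is closed
  let JKe : K ≃L[ℂ] K := ContinuousLinearEquiv.equivOfInverse JK JK hJK2' hJK2'
  have hρℂ : (ρ : ℂ) ≠ 0 := Complex.ofReal_ne_zero.mpr hρ
  let JEe : E ≃L[ℂ] E := ContinuousLinearEquiv.equivOfInverse ((ρ : ℂ) • JE) ((ρ⁻¹ : ℂ) • JE)
    (fun u => by
      show ((ρ : ℂ)⁻¹) • JE ((ρ : ℂ) • JE u) = u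
      rw [map_smul, smul_smul, inv_mul_cancel₀ hρℂ, one_smul, hJE2'])
    (fun u => by
      show ((ρ : ℂ)) • JE ((ρ : ℂ)⁻¹ • JE u) = u
      rw [map_smul, smul_smul, mul_inv_cancel₀ hρℂ, one_smul, hJE2'])
  let Φ : (K × E) ≃L[ℂ] WithLp 2 (K × E) := (JKe.prodCongr JEe).trans e.symm
  have hΦ : ∀ p : K × E, Φ p = J ((e.symm : (K × E) →L[ℂ] WithLp 2 (K × E)) p) := fun _ => rfl
  have hperp : ∀ p : K × E, p ∈ RLperp JK JE T V ρ ↔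
      (∀ x : H, ⟪J (L x), ((e.symm : (K × E) →L[ℂ] WithLp 2 (K × E)) p : WithLp 2 (K × E))⟫ = 0) := by
    intro p
    constructor
    · intro h x; rw [hJinner]; exact h x
    · intro h x
      have := h x
      rw [hJinner] at this
      exact this
  set Xset : Set (K × E) := Set.range (fun x : H => (T x, V x)) + RLperp JK JE T V ρ with hXdef
  have hRcoe : ∀ s : S, s ∈ LinearMap.range (G : S →ₗ[ℂ] S) ↔ (↑s : WithLp 2 (K × E)) ∈ Φ '' Xset := by
    intro s
    constructor
    · rintro ⟨σ, rfl⟩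
      obtain ⟨x, hx⟩ := σ.2
      set v : WithLp 2 (K × E) := J ↑σ - ↑(G σ) with hvdef
      have hv : v ∈ Sᗮ := Submodule.sub_starProjection_mem_orthogonal (K := S) (J ↑σ)
      set r : K × E := Φ.symm (-v) with hrdef
      have hΦr : Φ r = -v := Φ.apply_symm_apply _
      have hJr : J ((e.symm : (K × E) →L[ℂ] WithLp 2 (K × E)) r) = -v := by
        rw [← hΦ, hΦr]
      have hr : r ∈ RLperp JK JE T V ρ := by
        rw [hperp]
        intro x'
        rw [hJsym, hJr, inner_neg_right]
        have := (Submodule.mem_orthogonal S v).mp hv (L x') ⟨x', rfl⟩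
        rw [this, neg_zero]
      refine ⟨(T x, V x) + r, Set.add_mem_add ⟨x, rfl⟩ hr, ?_⟩
      rw [map_add, hΦr, hΦ]
      have : (e.symm : (K × E) →L[ℂ] WithLp 2 (K × E)) (T x, V x) = (L : H →ₗ[ℂ] WithLp 2 (K × E)) x := rfl
      rw [this, hx, hvdef]
      abel
    · rintro ⟨u, hu, hΦu⟩
      rw [hXdef, Set.mem_add] at hu
      obtain ⟨a, ha, b, hb, hab⟩ := hu
      obtain ⟨x, hxa⟩ := ha
      have hxa' : (T x, V x) = a := hxa
      set σ : S := ⟨L x, ⟨x, rfl⟩⟩ with hσdef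
      set v : WithLp 2 (K × E) := J ↑σ - ↑(G σ) with hvdef
      have hv : v ∈ Sᗮ := Submodule.sub_starProjection_mem_orthogonal (K := S) (J ↑σ)
      have hΦb : Φ b ∈ Sᗮ := by
        rw [Submodule.mem_orthogonal]
        rintro w ⟨x', rfl⟩
        rw [hΦ, ← hJsym]
        exact (hperp b).mp hb x'
      have hs' : (↑s : WithLp 2 (K × E)) = J ↑σ + Φ b := by
        calc (↑s : WithLp 2 (K × E)) = Φ (a + b) := by rw [hab, hΦu]
          _ = Φ a + Φ b := map_add _ _ _
          _ = J ↑σ + Φ b := by rw [← hxa', hΦ]; rfl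
      have hτmem : (↑s - ↑(G σ) : WithLp 2 (K × E)) ∈ Sᗮ := by
        have heq : (↑s - ↑(G σ) : WithLp 2 (K × E)) = Φ b + v := by
          rw [hs', hvdef]; abel
        rw [heq]
        exact Sᗮ.add_mem hΦb hv
      have hτcoe : ((↑(s - G σ) : WithLp 2 (K × E))) = ↑s - ↑(G σ) := rfl
      have h0 : ⟪(↑(s - G σ) : WithLp 2 (K × E)), (↑(s - G σ) : WithLp 2 (K × E))⟫ = 0 := by
        rw [hτcoe]
        exact (Submodule.mem_orthogonal S _).mp hτmem _ (s - G σ).2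
      have h1 : (↑(s - G σ) : WithLp 2 (K × E)) = 0 := inner_self_eq_zero.mp h0
      have h2 : s - G σ = 0 := by
        exact_mod_cast h1
      exact ⟨σ, (sub_eq_zero.mp h2).symm⟩
  -- R = range G is closed, hence complete
  set R : Submodule ℂ S := LinearMap.range (G : S →ₗ[ℂ] S) with hRdef
  have hRclosed : IsClosed (R : Set S) := by
    have hset : (R : Set S) = Subtype.val ⁻¹' (Φ '' Xset) := Set.ext fun s => hRcoe s
    rw [hset]
    exact (Φ.toHomeomorph.isClosedMap _ hpr).preimage continuous_subtype_val
  haveI : CompleteSpace R := hRclosed.completeSpace_coe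
  -- open mapping constant for G : S → R
  let Ghat : S →L[ℂ] R := G.codRestrict R (fun σ => LinearMap.mem_range_self _ σ)
  have hGhatsurj : Function.Surjective Ghat := by
    rintro ⟨s, hs⟩
    obtain ⟨u, hu⟩ := hs
    exact ⟨u, Subtype.ext hu⟩
  letI : NormedAddCommGroup S := Submodule.normedAddCommGroup S
  obtain ⟨CG, hCG0, hCG⟩ := Ghat.exists_preimage_norm_le hGhatsurj
  -- uniform positivity of G on its range
  have halpha : ∀ s₁ : S, s₁ ∈ R → ‖s₁‖ ^ 2 ≤ CG * (⟪G s₁, s₁⟫).re := by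
    intro s₁ hs₁
    obtain ⟨u, hu, hnu⟩ := hCG ⟨s₁, hs₁⟩
    have hGu : G u = s₁ := congrArg Subtype.val hu
    have hnu' : ‖u‖ ≤ CG * ‖s₁‖ := hnu
    have h1 : ‖s₁‖ ^ 2 = (⟪G u, s₁⟫).re := by
      rw [hGu]
      have := inner_self_eq_norm_sq_to_K (𝕜 := ℂ) s₁
      rw [this]
      norm_cast
    have h2 := cs_aux G hGsym hGpos u s₁
    have h3 : (⟪G u, u⟫).re ≤ CG * ‖s₁‖ * ‖s₁‖ := by
      calc (⟪G u, u⟫).re ≤ ‖(⟪G u, u⟫ : ℂ)‖ := by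
            exact Complex.re_le_norm _
        _ ≤ ‖G u‖ * ‖u‖ := norm_inner_le_norm _ _
        _ = ‖s₁‖ * ‖u‖ := by rw [hGu]
        _ ≤ ‖s₁‖ * (CG * ‖s₁‖) := mul_le_mul_of_nonneg_left hnu' (norm_nonneg _)
        _ = CG * ‖s₁‖ * ‖s₁‖ := by ring
    have h4 : (⟪G u, s₁⟫).re ^ 2 ≤ ‖⟪G u, s₁⟫‖ ^ 2 := by
      rw [← sq_abs ((⟪G u, s₁⟫ : ℂ).re)]
      exact pow_le_pow_left₀ (abs_nonneg _) (Complex.abs_re_le_norm _) 2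
    by_cases h0 : s₁ = 0
    · rw [h0]
      simp
    · have hpos' : 0 < ‖s₁‖ := norm_pos_iff.mpr h0
      have h5 : (⟪G u, u⟫).re * (⟪G s₁, s₁⟫).re
          ≤ (CG * ‖s₁‖ * ‖s₁‖) * (⟪G s₁, s₁⟫).re :=
        mul_le_mul_of_nonneg_right h3 (hGpos s₁)
      have h6 : (‖s₁‖ ^ 2) * (‖s₁‖ ^ 2) ≤ (CG * (⟪G s₁, s₁⟫).re) * (‖s₁‖ ^ 2) := by
        nlinarith [h1, h2, h4, h5]
      exact le_of_mul_le_mul_right h6 (by positivity)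
  -- final assembly
  refine ⟨1 / (CG * (c₁ + 1) ^ 2), by positivity, ?_⟩
  rintro y ⟨x, hxker, rfl⟩
  have hVx : V x = 0 := hxker
  set σ : S := ⟨L x, ⟨x, rfl⟩⟩ with hσdef
  set σ₁ : S := ↑(R.orthogonalProjectionOnto σ) with hσ₁def
  set σ₀ : S := σ - σ₁ with hσ₀def
  have hσ₀mem : σ₀ ∈ Rᗮ := Submodule.sub_starProjection_mem_orthogonal (K := R) σ
  have hGσ₀ : G σ₀ = 0 := by
    have h2 : ⟪(G (G σ₀) : S), σ₀⟫ = 0 :=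
      (Submodule.mem_orthogonal R σ₀).mp hσ₀mem (G (G σ₀)) (LinearMap.mem_range_self _ _)
    have h1 : ⟪G σ₀, G σ₀⟫ = 0 := by
      rw [hGsym σ₀ (G σ₀), ← inner_conj_symm, h2, map_zero]
    exact inner_self_eq_zero.mp h1
  have hσ₁R : σ₁ ∈ R := SetLike.coe_mem _
  obtain ⟨x'', hx''⟩ := σ₀.2
  have hTineq : ‖T x''‖ ≤ c₁ * ‖V x''‖ := hkerG σ₀ hGσ₀ x'' hx''
  -- componentwise estimates
  have hcompnorm : ∀ w : WithLp 2 (K × E), ‖w.fst‖ ≤ ‖w‖ ∧ ‖w.snd‖ ≤ ‖w‖ := by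
    intro w
    have h := WithLp.prod_norm_sq_eq_of_L2 w
    constructor <;> nlinarith [norm_nonneg w, norm_nonneg w.fst, norm_nonneg w.snd]
  have hdecomp : (↑σ : WithLp 2 (K × E)) = ↑σ₀ + ↑σ₁ := by
    rw [hσ₀def]
    push_cast
    abel
  have hfst : T x = T x'' + (↑σ₁ : WithLp 2 (K × E)).fst := by
    have h1 := congrArg (fun w : WithLp 2 (K × E) => w.fst) hdecomp
    rw [← hx''] at h1
    exact h1
  have hsnd : (0 : E) = V x'' + (↑σ₁ : WithLp 2 (K × E)).snd := by
    have h1 := congrArg (fun w : WithLp 2 (K × E) => w.snd) hdecomp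
    rw [← hx''] at h1
    have h2 : V x = V x'' + (↑σ₁ : WithLp 2 (K × E)).snd := h1
    rw [← hVx]
    exact h2
  have hnσ₁ : ‖σ₁‖ = ‖(↑σ₁ : WithLp 2 (K × E))‖ := rfl
  have hVx'' : ‖V x''‖ ≤ ‖σ₁‖ := by
    have h1 : V x'' = -(↑σ₁ : WithLp 2 (K × E)).snd := by
      rw [eq_neg_iff_add_eq_zero]; exact hsnd.symm
    rw [h1, norm_neg, hnσ₁]
    exact (hcompnorm _).2
  have hyb : ‖T x‖ ≤ (c₁ + 1) * ‖σ₁‖ := by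
    calc ‖T x‖ ≤ ‖T x''‖ + ‖(↑σ₁ : WithLp 2 (K × E)).fst‖ := by
          rw [hfst]; exact norm_add_le _ _
      _ ≤ c₁ * ‖V x''‖ + ‖σ₁‖ := by
          have := (hcompnorm (↑σ₁ : WithLp 2 (K × E))).1
          rw [hnσ₁]; exact add_le_add hTineq this
      _ ≤ c₁ * ‖σ₁‖ + ‖σ₁‖ := by
          have := mul_le_mul_of_nonneg_left hVx'' hc₁0
          linarith
      _ = (c₁ + 1) * ‖σ₁‖ := by ring
  have hre : (⟪G σ, σ⟫).re = (⟪JK (T x), T x⟫).re := by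
    have h1 : ⟪G σ, σ⟫ = ⟪JK (T x), T x⟫ + (ρ : ℂ) * ⟪JE (V x), V x⟫ := by
      rw [hGinner, hJinner]; rfl
    rw [h1, hVx]
    simp
  have hre2 : (⟪G σ, σ⟫).re = (⟪G σ₁, σ₁⟫).re := by
    have hσsum : σ = σ₀ + σ₁ := by rw [hσ₀def]; abel
    have h1 : ⟪G σ, σ⟫ = ⟪G σ₁, σ₀⟫ + ⟪G σ₁, σ₁⟫ := by
      calc ⟪G σ, σ⟫ = ⟪G (σ₀ + σ₁), σ₀ + σ₁⟫ := by rw [← hσsum]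
        _ = ⟪G σ₁, σ₀ + σ₁⟫ := by rw [map_add, hGσ₀, zero_add]
        _ = ⟪G σ₁, σ₀⟫ + ⟪G σ₁, σ₁⟫ := inner_add_right _ _ _
    have h2 : ⟪G σ₁, σ₀⟫ = 0 := by
      rw [hGsym σ₁ σ₀, hGσ₀, inner_zero_right]
    rw [h1, h2, zero_add]
  have hquant := halpha σ₁ hσ₁R
  -- hquant : ‖σ₁‖ ^ 2 ≤ CG * (⟪G σ₁, σ₁⟫).re
  have hfin : ‖T x‖ ^ 2 ≤ (CG * (c₁ + 1) ^ 2) * (⟪JK (T x), T x⟫).re := by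
    have h1 : (⟪JK (T x), T x⟫).re = (⟪G σ₁, σ₁⟫).re := by rw [← hre, hre2]
    rw [h1]
    nlinarith [hyb, hquant, norm_nonneg (T x), norm_nonneg σ₁, hc₁0, hCG0.le]
  have hD : (0:ℝ) < CG * (c₁ + 1) ^ 2 := by positivity
  rw [div_mul_eq_mul_div, one_mul, div_le_iff₀ hD]
  nlinarith [hfin, hGpos σ₁, hD]
end
end

section
/- Let ρ ∈ ℝ, ρ ≠ 0. If R(L) is closed in K×E, [Tx,Tx]_K + ρ·[Vx,Vx]_E ≥ 0 for every x ∈ H, and R(L) + R(L)^[⊥] is closed in K×E (i.e. R(L) is a nonnegative pseudo-regular subspace for [·,·]_ρ), then for every z₀ ∈ E the set sp(z₀) is nonempty, i.e. the function x ↦ [Tx,Tx]_K attains a minimum on {x ∈ H : Vx = z₀}. -/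
open scoped ComplexInnerProductSpace Pointwise

noncomputable section

variable {H K E : Type*}
  [NormedAddCommGroup H] [InnerProductSpace ℂ H] [CompleteSpace H]
  [NormedAddCommGroup K] [InnerProductSpace ℂ K] [CompleteSpace K]
  [NormedAddCommGroup E] [InnerProductSpace ℂ E] [CompleteSpace E]

section AuxGeneric

variable {H₁ H₂ : Type*}
  [NormedAddCommGroup H₁] [InnerProductSpace ℂ H₁] [CompleteSpace H₁]
  [NormedAddCommGroup H₂] [InnerProductSpace ℂ H₂] [CompleteSpace H₂]

/-- The adjoint of a surjective operator is bounded below. -/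
lemma aux_adj_lower (f : H₁ →L[ℂ] H₂) (hf : Function.Surjective f) :
    ∃ c : ℝ, 0 < c ∧ ∀ y : H₂, ‖y‖ ≤ c * ‖ContinuousLinearMap.adjoint f y‖ := by
  obtain ⟨C, hC, h⟩ := f.exists_preimage_norm_le hf
  refine ⟨C, hC, fun y => ?_⟩
  obtain ⟨x, hx, hxn⟩ := h y
  have h1 : (⟪x, ContinuousLinearMap.adjoint f y⟫ : ℂ) = (‖y‖ : ℂ) ^ 2 := by
    rw [ContinuousLinearMap.adjoint_inner_right, hx]
    exact inner_self_eq_norm_sq_to_K y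
  have h2 := norm_inner_le_norm (𝕜 := ℂ) x (ContinuousLinearMap.adjoint f y)
  rw [h1] at h2
  have h3 : ‖((‖y‖ : ℂ)) ^ 2‖ = ‖y‖ ^ 2 := by
    rw [norm_pow, Complex.norm_real, norm_norm]
  rw [h3] at h2
  rcases eq_or_lt_of_le (norm_nonneg y) with h0 | h0
  · rw [← h0]; positivity
  · nlinarith [norm_nonneg (ContinuousLinearMap.adjoint f y),
      mul_le_mul_of_nonneg_right hxn (norm_nonneg (ContinuousLinearMap.adjoint f y))]

lemma aux_cauchy_of_bound {X Y : Type*} [NormedAddCommGroup X] [NormedAddCommGroup Y]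
    (u : ℕ → X) (w : ℕ → Y) (c : ℝ)
    (h : ∀ n m, ‖u n - u m‖ ≤ c * ‖w n - w m‖) (hw : CauchySeq w) : CauchySeq u := by
  set c' : ℝ := max c 1 with hc'
  have hc'0 : 0 < c' := lt_of_lt_of_le one_pos (le_max_right _ _)
  have h' : ∀ n m, ‖u n - u m‖ ≤ c' * ‖w n - w m‖ := fun n m =>
    (h n m).trans (mul_le_mul_of_nonneg_right (le_max_left _ _) (norm_nonneg _))
  rw [Metric.cauchySeq_iff] at hw ⊢
  intro ε hε
  obtain ⟨N, hN⟩ := hw (ε / c') (by positivity)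
  refine ⟨N, fun m hm n hn => ?_⟩
  have := hN m hm n hn
  rw [dist_eq_norm] at this ⊢
  calc ‖u m - u n‖ ≤ c' * ‖w m - w n‖ := h' m n
    _ < c' * (ε / c') := by exact (mul_lt_mul_iff_right₀ hc'0).mpr this
    _ = ε := by field_simp

lemma aux_image_closed {X' Y' : Type*}
    [NormedAddCommGroup X'] [NormedSpace ℂ X'] [CompleteSpace X']
    [NormedAddCommGroup Y'] [NormedSpace ℂ Y'] [CompleteSpace Y']
    (f : X' →L[ℂ] Y') (hr : IsClosed (Set.range f)) (X : Submodule ℂ X')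
    (hX : IsClosed (X : Set X')) (hker : LinearMap.ker (f : X' →ₗ[ℂ] Y') ≤ X) :
    IsClosed (f '' (X : Set X')) := by
  set R : Submodule ℂ Y' := LinearMap.range (f : X' →ₗ[ℂ] Y') with hR
  have hRset : (R : Set Y') = Set.range f := by
    ext y; simp [hR, LinearMap.mem_range]
  haveI : CompleteSpace R := (hRset ▸ hr).completeSpace_coe
  set f' : X' →L[ℂ] R := f.codRestrict R (fun x => LinearMap.mem_range_self _ x) with hf'
  have hsurj : Function.Surjective f' := by
    rintro ⟨y, hy⟩
    obtain ⟨x, hx⟩ := hy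
    exact ⟨x, Subtype.ext hx⟩
  obtain ⟨C, hC, hpre⟩ := f'.exists_preimage_norm_le hsurj
  refine IsSeqClosed.isClosed ?_
  intro u v hu hv
  choose a haX hfa using hu
  have hvr : v ∈ Set.range f := by
    refine hr.mem_of_tendsto hv (Filter.Eventually.of_forall fun n => ?_)
    rw [← hfa n]; exact Set.mem_range_self _
  obtain ⟨x, hx⟩ := hvr
  have hrmem : ∀ n, u n - v ∈ R := by
    intro n
    exact ⟨a n - x, by rw [map_sub, ContinuousLinearMap.coe_coe, hfa n, hx]⟩
  choose w hw hwn using fun n => hpre ⟨u n - v, hrmem n⟩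
  have hfw : ∀ n, f (w n) = u n - v := by
    intro n
    have := congrArg (Subtype.val) (hw n)
    simpa [hf'] using this
  have hxw : ∀ n, x + w n ∈ X := by
    intro n
    have hk : a n - x - w n ∈ LinearMap.ker (f : X' →ₗ[ℂ] Y') := by
      rw [LinearMap.mem_ker]
      simp only [ContinuousLinearMap.coe_coe, map_sub, hfa n, hx, hfw n]
      abel
    have heq : x + w n = a n - (a n - x - w n) := by abel
    rw [heq]
    exact X.sub_mem (haX n) (hker hk)
  have hw0 : Filter.Tendsto w Filter.atTop (nhds 0) := by
    apply squeeze_zero_norm (fun n => (hwn n).trans (le_of_eq rfl))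
    have h1 : Filter.Tendsto (fun n => u n - v) Filter.atTop (nhds 0) := by
      simpa using hv.sub (tendsto_const_nhds (x := v))
    have h2 : Filter.Tendsto (fun n => C * ‖u n - v‖) Filter.atTop (nhds (C * ‖(0:Y')‖)) :=
      (h1.norm).const_mul C
    rw [norm_zero, mul_zero] at h2
    exact h2
  have hlim : Filter.Tendsto (fun n => x + w n) Filter.atTop (nhds x) := by
    have := (tendsto_const_nhds (x := x)).add hw0
    simpa using this
  have hxX : x ∈ X := hX.mem_of_tendsto hlim (Filter.Eventually.of_forall hxw)
  exact ⟨x, hxX, hx⟩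

end AuxGeneric

section SmOpBasic

variable (JK : K →L[ℂ] K) (JE : E →L[ℂ] E) (T : H →L[ℂ] K) (V : H →L[ℂ] E) (ρ : ℝ)

lemma smOp_apply (x : H) :
    smOp JK JE T V ρ x
      = ContinuousLinearMap.adjoint T (JK (T x))
        + (ρ : ℂ) • ContinuousLinearMap.adjoint V (JE (V x)) := rfl

lemma smOp_inner (x y : H) :
    (⟪smOp JK JE T V ρ x, y⟫ : ℂ) = ⟪JK (T x), T y⟫ + (ρ:ℂ) * ⟪JE (V x), V y⟫ := by
  rw [smOp_apply, inner_add_left, inner_smul_left, ContinuousLinearMap.adjoint_inner_left,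
    ContinuousLinearMap.adjoint_inner_left, Complex.conj_ofReal]

lemma smOp_sa (hJKsa : IsSelfAdjoint JK) (hJEsa : IsSelfAdjoint JE) :
    IsSelfAdjoint (smOp JK JE T V ρ) := by
  have hK : ContinuousLinearMap.adjoint JK = JK := by
    rw [← ContinuousLinearMap.star_eq_adjoint]; exact hJKsa.star_eq
  have hE : ContinuousLinearMap.adjoint JE = JE := by
    rw [← ContinuousLinearMap.star_eq_adjoint]; exact hJEsa.star_eq
  have h1 : IsSelfAdjoint ((ContinuousLinearMap.adjoint T) ∘L JK ∘L T) := by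
    rw [IsSelfAdjoint, ContinuousLinearMap.star_eq_adjoint, ContinuousLinearMap.adjoint_comp,
      ContinuousLinearMap.adjoint_comp, ContinuousLinearMap.adjoint_adjoint, hK,
      ContinuousLinearMap.comp_assoc]
  have h2 : IsSelfAdjoint ((ContinuousLinearMap.adjoint V) ∘L JE ∘L V) := by
    rw [IsSelfAdjoint, ContinuousLinearMap.star_eq_adjoint, ContinuousLinearMap.adjoint_comp,
      ContinuousLinearMap.adjoint_comp, ContinuousLinearMap.adjoint_adjoint, hE,
      ContinuousLinearMap.comp_assoc]
  have h3 : IsSelfAdjoint ((ρ:ℂ) • ((ContinuousLinearMap.adjoint V) ∘L JE ∘L V)) := by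
    rw [IsSelfAdjoint, star_smul, h2.star_eq, Complex.star_def, Complex.conj_ofReal]
  exact h1.add h3

end SmOpBasic

lemma aux_expand (M : H →L[ℂ] H) (hM : IsSelfAdjoint M) (a b : H) :
    (⟪M (a + b), a + b⟫ : ℂ).re
      = (⟪M a, a⟫ : ℂ).re + 2 * (⟪M a, b⟫ : ℂ).re + (⟪M b, b⟫ : ℂ).re := by
  have hadj : ContinuousLinearMap.adjoint M = M := by
    rw [← ContinuousLinearMap.star_eq_adjoint]; exact hM.star_eq
  have hba : (⟪M b, a⟫ : ℂ) = (starRingEnd ℂ) ⟪M a, b⟫ := by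
    conv_lhs => rw [← hadj]
    rw [ContinuousLinearMap.adjoint_inner_left]
    exact (inner_conj_symm b (M a)).symm
  rw [map_add, inner_add_left, inner_add_right, inner_add_right, hba]
  simp only [Complex.add_re, Complex.conj_re]
  ring

lemma aux_VkerG_closed
    (JK : K →L[ℂ] K) (hJK2 : JK ∘L JK = 1)
    (JE : E →L[ℂ] E)
    (T : H →L[ℂ] K) (V : H →L[ℂ] E)
    (hT : Function.Surjective T) (ρ : ℝ)
    (hclosedR : IsClosed (Set.range (fun x : H => (T x, V x)))) :
    IsClosed (V '' (LinearMap.ker (smOp JK JE T V ρ : H →ₗ[ℂ] H) : Set H)) := by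
  obtain ⟨c, hc, hadj⟩ := aux_adj_lower T hT
  have hJK : ∀ a : K, JK (JK a) = a := by
    intro a
    have := ContinuousLinearMap.ext_iff.mp hJK2 a
    simpa using this
  refine IsSeqClosed.isClosed ?_
  intro z zlim hz hzt
  choose a haK hVa using hz
  have hker : ∀ n, smOp JK JE T V ρ (a n) = 0 := fun n => haK n
  have hG : ∀ n, ContinuousLinearMap.adjoint T (JK (T (a n)))
      = -((ρ:ℂ) • ContinuousLinearMap.adjoint V (JE (z n))) := by
    intro n
    have h0 := hker n
    rw [smOp_apply, hVa n] at h0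
    exact eq_neg_of_add_eq_zero_left h0
  have hwt : Filter.Tendsto (fun n => -((ρ:ℂ) • ContinuousLinearMap.adjoint V (JE (z n))))
      Filter.atTop (nhds (-((ρ:ℂ) • ContinuousLinearMap.adjoint V (JE zlim)))) := by
    apply Filter.Tendsto.neg
    apply Filter.Tendsto.const_smul
    exact ((ContinuousLinearMap.adjoint V).continuous.tendsto _).comp
      ((JE.continuous.tendsto _).comp hzt)
  have hcau : CauchySeq (fun n => JK (T (a n))) := by
    apply aux_cauchy_of_bound _ (fun n => -((ρ:ℂ) • ContinuousLinearMap.adjoint V (JE (z n)))) c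
    · intro n m
      have h1 := hadj (JK (T (a n)) - JK (T (a m)))
      rw [map_sub, hG n, hG m] at h1
      exact h1
    · exact hwt.cauchySeq
  obtain ⟨q, hq⟩ := cauchySeq_tendsto_of_complete hcau
  have hTt : Filter.Tendsto (fun n => T (a n)) Filter.atTop (nhds (JK q)) := by
    have h1 : Filter.Tendsto (fun n => JK (JK (T (a n)))) Filter.atTop (nhds (JK q)) :=
      (JK.continuous.tendsto _).comp hq
    convert h1 using 2 with n
    rw [hJK]
  have hVt : Filter.Tendsto (fun n => V (a n)) Filter.atTop (nhds zlim) := by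
    have : (fun n => V (a n)) = z := funext hVa
    rw [this]; exact hzt
  have hmem : (JK q, zlim) ∈ Set.range (fun x : H => (T x, V x)) :=
    hclosedR.mem_of_tendsto (hTt.prodMk_nhds hVt) (Filter.Eventually.of_forall fun n => ⟨a n, rfl⟩)
  obtain ⟨xt, hxt⟩ := hmem
  have hTx : T xt = JK q := (Prod.mk.injEq _ _ _ _).mp hxt |>.1
  have hVx : V xt = zlim := (Prod.mk.injEq _ _ _ _).mp hxt |>.2
  have hGxt : smOp JK JE T V ρ xt = 0 := by
    have hF : Continuous (fun p : K × E =>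
        ContinuousLinearMap.adjoint T (JK p.1) + (ρ:ℂ) • ContinuousLinearMap.adjoint V (JE p.2)) := by
      apply Continuous.add
      · exact (ContinuousLinearMap.adjoint T).continuous.comp (JK.continuous.comp continuous_fst)
      · exact ((ContinuousLinearMap.adjoint V).continuous.comp (JE.continuous.comp continuous_snd)).const_smul _
    have h1 : Filter.Tendsto (fun n => smOp JK JE T V ρ (a n)) Filter.atTop
        (nhds (smOp JK JE T V ρ xt)) := by
      have h2 := (hF.tendsto (T xt, V xt)).comp (hTx ▸ hVx ▸ hTt.prodMk_nhds hVt)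
      exact h2
    have h3 : Filter.Tendsto (fun n => smOp JK JE T V ρ (a n)) Filter.atTop (nhds 0) := by
      have : (fun n => smOp JK JE T V ρ (a n)) = fun _ => (0:H) := funext hker
      rw [this]; exact tendsto_const_nhds
    exact tendsto_nhds_unique h1 h3
  exact ⟨xt, by simpa [LinearMap.mem_ker] using hGxt, hVx⟩

set_option maxHeartbeats 1000000 in
lemma aux_rangeG_closed
    (JK : K →L[ℂ] K) (hJKsa : IsSelfAdjoint JK) (hJK2 : JK ∘L JK = 1)
    (JE : E →L[ℂ] E) (hJEsa : IsSelfAdjoint JE) (hJE2 : JE ∘L JE = 1)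
    (T : H →L[ℂ] K) (V : H →L[ℂ] E) (ρ : ℝ) (hρ : ρ ≠ 0)
    (hclosedR : IsClosed (Set.range (fun x : H => (T x, V x))))
    (hpr : IsClosed (Set.range (fun x : H => (T x, V x)) + RLperp JK JE T V ρ)) :
    IsClosed (Set.range (smOp JK JE T V ρ)) := by
  classical
  have hJKadj : ContinuousLinearMap.adjoint JK = JK := by
    rw [← ContinuousLinearMap.star_eq_adjoint]; exact hJKsa.star_eq
  have hJEadj : ContinuousLinearMap.adjoint JE = JE := by
    rw [← ContinuousLinearMap.star_eq_adjoint]; exact hJEsa.star_eq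
  have hJKapp : ∀ a : K, JK (JK a) = a := by
    intro a; have := ContinuousLinearMap.ext_iff.mp hJK2 a; simpa using this
  have hJEapp : ∀ a : E, JE (JE a) = a := by
    intro a; have := ContinuousLinearMap.ext_iff.mp hJE2 a; simpa using this
  set e : WithLp 2 (K × E) ≃L[ℂ] K × E := WithLp.prodContinuousLinearEquiv 2 ℂ K E with he
  set Lmap : H →L[ℂ] WithLp 2 (K × E) :=
    (e.symm : (K × E) →L[ℂ] WithLp 2 (K × E)).comp (T.prod V) with hLmap
  have hLfst : ∀ x : H, (Lmap x).fst = T x := fun x => rfl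
  have hLsnd : ∀ x : H, (Lmap x).snd = V x := fun x => rfl
  have hinner2 : ∀ (x : H) (p : WithLp 2 (K × E)),
      (⟪p, Lmap x⟫ : ℂ) = ⟪p.fst, T x⟫ + ⟪p.snd, V x⟫ := by
    intro x p
    rw [WithLp.prod_inner_apply]; rfl
  set S : Submodule ℂ (WithLp 2 (K × E)) := LinearMap.range (Lmap : H →ₗ[ℂ] WithLp 2 (K × E)) with hS
  have hSset : (S : Set (WithLp 2 (K × E))) = ⇑e ⁻¹' (Set.range fun x : H => (T x, V x)) := by
    ext p
    simp only [hS, SetLike.mem_coe, LinearMap.mem_range, Set.mem_preimage, Set.mem_range]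
    constructor
    · rintro ⟨x, rfl⟩
      exact ⟨x, by simp [hLmap]⟩
    · rintro ⟨x, hx⟩
      refine ⟨x, ?_⟩
      have : e.symm (T x, V x) = e.symm (e p) := by rw [hx]
      simpa [hLmap] using this
  have hSclosed : IsClosed (S : Set (WithLp 2 (K × E))) := by
    rw [hSset]; exact hclosedR.preimage e.continuous
  haveI : CompleteSpace S := hSclosed.completeSpace_coe
  set Jbase : K × E →L[ℂ] K × E := JK.prodMap ((ρ:ℂ) • JE) with hJbase
  set Jbase' : K × E →L[ℂ] K × E := JK.prodMap (((ρ:ℂ)⁻¹) • JE) with hJbase'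
  set Jp : WithLp 2 (K × E) →L[ℂ] WithLp 2 (K × E) :=
    (e.symm : (K × E) →L[ℂ] WithLp 2 (K × E)) ∘L Jbase ∘L (e : WithLp 2 (K × E) →L[ℂ] K × E)
    with hJp
  set Jp' : WithLp 2 (K × E) →L[ℂ] WithLp 2 (K × E) :=
    (e.symm : (K × E) →L[ℂ] WithLp 2 (K × E)) ∘L Jbase' ∘L (e : WithLp 2 (K × E) →L[ℂ] K × E)
    with hJp'
  have hρC : (ρ:ℂ) ≠ 0 := by exact_mod_cast Complex.ofReal_ne_zero.mpr hρ
  have hJbase_app : ∀ q : K × E, Jbase q = (JK q.1, (ρ:ℂ) • JE q.2) := fun q => rfl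
  have hJbase'_app : ∀ q : K × E, Jbase' q = (JK q.1, ((ρ:ℂ))⁻¹ • JE q.2) := fun q => rfl
  have hJpJp' : ∀ p, Jp (Jp' p) = p := by
    intro p
    have h1 : Jp (Jp' p) = e.symm (Jbase (Jbase' (e p))) := by
      simp only [hJp, hJp', ContinuousLinearMap.comp_apply, ContinuousLinearEquiv.coe_coe]
      rw [e.apply_symm_apply]
    rw [h1, hJbase'_app, hJbase_app]
    simp only [map_smul, smul_smul]
    rw [hJKapp, mul_inv_cancel₀ hρC, one_smul, hJEapp, Prod.mk.eta]
    exact e.symm_apply_apply p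
  -- components of Jp
  have hJpfst : ∀ p : WithLp 2 (K × E), (Jp p).fst = JK p.fst := by
    intro p
    have : Jp p = e.symm (Jbase (e p)) := by
      simp only [hJp, ContinuousLinearMap.comp_apply, ContinuousLinearEquiv.coe_coe]
    rw [this, hJbase_app]
    rfl
  have hJpsnd : ∀ p : WithLp 2 (K × E), (Jp p).snd = (ρ:ℂ) • JE p.snd := by
    intro p
    have : Jp p = e.symm (Jbase (e p)) := by
      simp only [hJp, ContinuousLinearMap.comp_apply, ContinuousLinearEquiv.coe_coe]
    rw [this, hJbase_app]
    rfl
  have hJKswap : ∀ a b : K, (⟪JK a, b⟫ : ℂ) = ⟪a, JK b⟫ := by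
    intro a b
    nth_rewrite 1 [← hJKadj]
    rw [ContinuousLinearMap.adjoint_inner_left]
  have hJEswap : ∀ a b : E, (⟪JE a, b⟫ : ℂ) = ⟪a, JE b⟫ := by
    intro a b
    nth_rewrite 1 [← hJEadj]
    rw [ContinuousLinearMap.adjoint_inner_left]
  set adjL : WithLp 2 (K × E) →L[ℂ] H := ContinuousLinearMap.adjoint Lmap with hadjL
  set Phi : WithLp 2 (K × E) →L[ℂ] H := adjL ∘L Jp with hPhi
  have hPhiInner : ∀ (p : WithLp 2 (K × E)) (x : H),
      (⟪Phi p, x⟫ : ℂ) = ⟪JK p.fst, T x⟫ + (ρ:ℂ) * ⟪JE p.snd, V x⟫ := by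
    intro p x
    rw [hPhi, ContinuousLinearMap.comp_apply, hadjL, ContinuousLinearMap.adjoint_inner_left,
      hinner2, hJpfst, hJpsnd, inner_smul_left, Complex.conj_ofReal]
  have hPhiL : ∀ x : H, Phi (Lmap x) = smOp JK JE T V ρ x := by
    intro x
    apply ext_inner_right ℂ
    intro y
    rw [smOp_inner, hPhiInner, hLfst, hLsnd]
  have key : ∀ (p : WithLp 2 (K × E)) (x : H),
      (⟪JK (T x), p.fst⟫ + (ρ:ℂ) * ⟪JE (V x), p.snd⟫ : ℂ)
        = (starRingEnd ℂ) (⟪Phi p, x⟫ : ℂ) := by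
    intro p x
    rw [hPhiInner, map_add, map_mul, Complex.conj_ofReal, inner_conj_symm, inner_conj_symm,
      hJKswap, hJEswap]
  have hkerPhi : ∀ p : WithLp 2 (K × E),
      p ∈ LinearMap.ker (Phi : WithLp 2 (K × E) →ₗ[ℂ] H) ↔ (p.fst, p.snd) ∈ RLperp JK JE T V ρ := by
    intro p
    rw [LinearMap.mem_ker, ContinuousLinearMap.coe_coe]
    constructor
    · intro hp x
      show (⟪JK (T x), p.fst⟫ + (ρ:ℂ) * ⟪JE (V x), p.snd⟫ : ℂ) = 0
      rw [key p x, hp, inner_zero_left, map_zero]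
    · intro hp
      apply ext_inner_right ℂ
      intro x
      have h1 : (⟪JK (T x), p.fst⟫ + (ρ:ℂ) * ⟪JE (V x), p.snd⟫ : ℂ) = 0 := hp x
      rw [key p x] at h1
      rw [inner_zero_left]
      exact (starRingEnd ℂ).injective (by rw [h1, map_zero])
  -- the closed subspace C' = S ⊔ ker Phi
  set C' : Submodule ℂ (WithLp 2 (K × E)) := S ⊔ LinearMap.ker (Phi : WithLp 2 (K × E) →ₗ[ℂ] H) with hC'
  have hkerset : (LinearMap.ker (Phi : WithLp 2 (K × E) →ₗ[ℂ] H) : Set (WithLp 2 (K × E)))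
      = ⇑e ⁻¹' (RLperp JK JE T V ρ) := by
    ext p
    simp only [SetLike.mem_coe, Set.mem_preimage]
    rw [hkerPhi p]
    have : e p = (p.fst, p.snd) := rfl
    rw [this]
  have hC'set : (C' : Set (WithLp 2 (K × E)))
      = ⇑e ⁻¹' ((Set.range fun x : H => (T x, V x)) + RLperp JK JE T V ρ) := by
    rw [hC', Submodule.coe_sup]
    ext p
    constructor
    · rintro ⟨s₁, hs₁, t₁, ht₁, rfl⟩
      refine Set.mem_preimage.mpr ?_
      rw [map_add]
      refine Set.add_mem_add ?_ ?_
      · have := hSset ▸ hs₁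
        exact Set.mem_preimage.mp this
      · have := hkerset ▸ ht₁
        exact Set.mem_preimage.mp this
    · intro hp
      obtain ⟨a, ha, b, hb, hab⟩ := Set.mem_add.mp (Set.mem_preimage.mp hp)
      refine ⟨e.symm a, ?_, e.symm b, ?_, ?_⟩
      · rw [hSset]
        refine Set.mem_preimage.mpr ?_
        rw [e.apply_symm_apply]
        exact ha
      · rw [hkerset]
        refine Set.mem_preimage.mpr ?_
        rw [e.apply_symm_apply]
        exact hb
      · have h2 := congrArg e.symm hab
        rw [map_add] at h2
        show e.symm a + e.symm b = p
        rw [h2, e.symm_apply_apply]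
  have hC'closed : IsClosed (C' : Set (WithLp 2 (K × E))) := by
    rw [hC'set]; exact hpr.preimage e.continuous
  -- adjL is bounded below on S
  have hadjS : ∃ c : ℝ, 0 < c ∧ ∀ p ∈ S, ‖p‖ ≤ c * ‖adjL p‖ := by
    set Lr : H →L[ℂ] S := Lmap.codRestrict S (fun x => LinearMap.mem_range_self _ x) with hLr
    have hsurj : Function.Surjective Lr := by
      rintro ⟨s₁, hs₁⟩
      obtain ⟨x, hx⟩ := hs₁
      exact ⟨x, Subtype.ext hx⟩
    obtain ⟨c, hc, hb⟩ := aux_adj_lower Lr hsurj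
    have hadj_eq : ∀ sp : S, ContinuousLinearMap.adjoint Lr sp = adjL (sp : WithLp 2 (K × E)) := by
      intro sp
      apply ext_inner_right ℂ
      intro y
      rw [ContinuousLinearMap.adjoint_inner_left, hadjL, ContinuousLinearMap.adjoint_inner_left]
      rfl
    refine ⟨c, hc, fun p hp => ?_⟩
    have := hb ⟨p, hp⟩
    rw [hadj_eq ⟨p, hp⟩] at this
    exact this
  obtain ⟨cS, hcS, hSb⟩ := hadjS
  -- adjL kills S-perp
  have hkeradjL : ∀ q ∈ Sᗮ, adjL q = 0 := by
    intro q hq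
    apply ext_inner_right ℂ
    intro x
    rw [hadjL, ContinuousLinearMap.adjoint_inner_left, inner_zero_left]
    have h1 : (⟪Lmap x, q⟫ : ℂ) = 0 :=
      (Submodule.mem_orthogonal S q).mp hq (Lmap x) (LinearMap.mem_range_self _ x)
    rw [← inner_conj_symm, h1, map_zero]
  -- Phi is bounded below on (ker Phi)ᗮ
  have hPhib : ∀ p ∈ (LinearMap.ker (Phi : WithLp 2 (K × E) →ₗ[ℂ] H))ᗮ, ‖p‖ ≤ ((‖Jp'‖ + 1) * cS) * ‖Phi p‖ := by
    intro p hp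
    set u : WithLp 2 (K × E) := Jp p with hu
    set s₀ : WithLp 2 (K × E) := (Submodule.orthogonalProjection S u : WithLp 2 (K × E)) with hs₀
    have hs₀S : s₀ ∈ S := SetLike.coe_mem _
    have husub : u - s₀ ∈ Sᗮ := Submodule.sub_starProjection_mem_orthogonal (K := S) u
    have hadj0 : adjL (u - s₀) = 0 := hkeradjL _ husub
    have hker1 : p - Jp' s₀ ∈ LinearMap.ker (Phi : WithLp 2 (K × E) →ₗ[ℂ] H) := by
      rw [LinearMap.mem_ker, ContinuousLinearMap.coe_coe, hPhi, ContinuousLinearMap.comp_apply, map_sub, hJpJp']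
      show adjL (u - s₀) = 0
      exact hadj0
    have hip : (⟪p - Jp' s₀, p⟫ : ℂ) = 0 :=
      (Submodule.mem_orthogonal _ p).mp hp _ hker1
    rw [inner_sub_left, sub_eq_zero] at hip
    -- ‖p‖ ≤ (‖Jp'‖+1) * ‖s₀‖
    have h2 : ‖p‖^2 ≤ (‖Jp'‖ * ‖s₀‖) * ‖p‖ := by
      have ha : (⟪p, p⟫ : ℂ) = ⟪Jp' s₀, p⟫ := hip
      have hb : ‖(⟪p, p⟫ : ℂ)‖ = ‖p‖^2 := by
        rw [inner_self_eq_norm_sq_to_K, norm_pow, RCLike.norm_ofReal, abs_norm]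
      have hc' := norm_inner_le_norm (𝕜 := ℂ) (Jp' s₀) p
      rw [← ha] at hc'
      rw [hb] at hc'
      refine hc'.trans ?_
      have := (Jp'.le_opNorm s₀)
      exact mul_le_mul_of_nonneg_right this (norm_nonneg p)
    have h3 : ‖p‖ ≤ (‖Jp'‖ + 1) * ‖s₀‖ := by
      rcases eq_or_lt_of_le (norm_nonneg p) with h0 | h0
      · rw [← h0]; positivity
      · nlinarith [norm_nonneg Jp', norm_nonneg s₀]
    -- ‖s₀‖ ≤ cS * ‖Phi p‖
    have hadPhi : adjL s₀ = Phi p := by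
      have h5 : adjL u - adjL s₀ = 0 := by rw [← map_sub adjL u s₀]; exact hadj0
      have h6 : adjL s₀ = adjL u := by
        have := sub_eq_zero.mp h5
        exact this.symm
      rw [h6, hPhi, ContinuousLinearMap.comp_apply]
    have h4 : ‖s₀‖ ≤ cS * ‖Phi p‖ := by
      have := hSb s₀ hs₀S
      rw [hadPhi] at this
      exact this
    calc ‖p‖ ≤ (‖Jp'‖ + 1) * ‖s₀‖ := h3
      _ ≤ (‖Jp'‖ + 1) * (cS * ‖Phi p‖) := by
          apply mul_le_mul_of_nonneg_left h4
          positivity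
      _ = ((‖Jp'‖ + 1) * cS) * ‖Phi p‖ := by ring
  -- range of smOp is the image of C' under Phi
  have hrange_eq : Set.range (smOp JK JE T V ρ) = Phi '' (C' : Set (WithLp 2 (K × E))) := by
    ext w
    constructor
    · rintro ⟨x, rfl⟩
      exact ⟨Lmap x, Submodule.mem_sup_left (LinearMap.mem_range_self _ x), hPhiL x⟩
    · rintro ⟨p, hp, rfl⟩
      obtain ⟨s₁, hs₁, t₁, ht₁, rfl⟩ := Submodule.mem_sup.mp hp
      obtain ⟨x, rfl⟩ := hs₁
      refine ⟨x, ?_⟩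
      rw [map_add, ContinuousLinearMap.coe_coe, hPhiL x]
      have : Phi t₁ = 0 := LinearMap.mem_ker.mp ht₁
      rw [this, add_zero]
  rw [hrange_eq]
  haveI : CompleteSpace (LinearMap.ker (Phi : WithLp 2 (K × E) →ₗ[ℂ] H)) := (ContinuousLinearMap.isClosed_ker Phi).completeSpace_coe
  refine IsSeqClosed.isClosed ?_
  intro u w hu hw
  choose pp hpC hPp using hu
  set qq : ℕ → WithLp 2 (K × E) := fun n =>
    pp n - (Submodule.orthogonalProjection (LinearMap.ker (Phi : WithLp 2 (K × E) →ₗ[ℂ] H)) (pp n) : WithLp 2 (K × E)) with hqq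
  have hqC : ∀ n, qq n ∈ C' := by
    intro n
    exact C'.sub_mem (hpC n)
      (Submodule.mem_sup_right (SetLike.coe_mem _))
  have hqorth : ∀ n, qq n ∈ (LinearMap.ker (Phi : WithLp 2 (K × E) →ₗ[ℂ] H))ᗮ := fun n =>
    Submodule.sub_starProjection_mem_orthogonal _
  have hPq : ∀ n, Phi (qq n) = u n := by
    intro n
    rw [hqq]
    simp only [map_sub]
    have h0 : Phi ((Submodule.orthogonalProjection (LinearMap.ker (Phi : WithLp 2 (K × E) →ₗ[ℂ] H)) (pp n) : WithLp 2 (K × E))) = 0 :=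
      LinearMap.mem_ker.mp (SetLike.coe_mem _)
    rw [h0, sub_zero, hPp]
  have hCau : CauchySeq qq := by
    apply aux_cauchy_of_bound qq u ((‖Jp'‖ + 1) * cS)
    · intro n m
      have hmem : qq n - qq m ∈ (LinearMap.ker (Phi : WithLp 2 (K × E) →ₗ[ℂ] H))ᗮ :=
        Submodule.sub_mem _ (hqorth n) (hqorth m)
      have := hPhib _ hmem
      rw [map_sub, hPq n, hPq m] at this
      exact this
    · exact hw.cauchySeq
  obtain ⟨ql, hql⟩ := cauchySeq_tendsto_of_complete hCau
  have hqlC : ql ∈ C' := hC'closed.mem_of_tendsto hql (Filter.Eventually.of_forall hqC)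
  refine ⟨ql, hqlC, ?_⟩
  have h1 : Filter.Tendsto (fun n => Phi (qq n)) Filter.atTop (nhds (Phi ql)) :=
    (Phi.continuous.tendsto _).comp hql
  have h2 : Filter.Tendsto (fun n => Phi (qq n)) Filter.atTop (nhds w) := by
    have : (fun n => Phi (qq n)) = u := funext hPq
    rw [this]; exact hw
  exact tendsto_nhds_unique h1 h2

set_option maxHeartbeats 1600000 in
theorem stmt16
    (JK : K →L[ℂ] K) (hJKsa : IsSelfAdjoint JK) (hJK2 : JK ∘L JK = 1)
    (JE : E →L[ℂ] E) (hJEsa : IsSelfAdjoint JE) (hJE2 : JE ∘L JE = 1)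
    (T : H →L[ℂ] K) (V : H →L[ℂ] E)
    (hT : Function.Surjective T) (hV : Function.Surjective V)
    (ρ : ℝ) (hρ : ρ ≠ 0)
    (hclosedR : IsClosed (Set.range (fun x : H => (T x, V x))))
    (hnn : ∀ x : H, 0 ≤ (⟪JK (T x), T x⟫).re + ρ * (⟪JE (V x), V x⟫).re)
    (hpr : IsClosed (Set.range (fun x : H => (T x, V x)) + RLperp JK JE T V ρ)) :
    ∀ z₀ : E, (spSet JK T V z₀).Nonempty := by
  intro z₀
  classical
  set G : H →L[ℂ] H := smOp JK JE T V ρ with hG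
  have hGsa : IsSelfAdjoint G := smOp_sa JK JE T V ρ hJKsa hJEsa
  have hGinner : ∀ x y : H, (⟪G x, y⟫ : ℂ) = ⟪JK (T x), T y⟫ + (ρ:ℂ) * ⟪JE (V x), V y⟫ :=
    fun x y => smOp_inner JK JE T V ρ x y
  set q : H → ℝ := fun x => (⟪G x, x⟫ : ℂ).re with hq
  have hq0 : ∀ x, 0 ≤ q x := by
    intro x
    have h1 : q x = (⟪JK (T x), T x⟫ : ℂ).re + ρ * (⟪JE (V x), V x⟫ : ℂ).re := by
      rw [hq]
      simp only
      rw [hGinner, Complex.add_re, Complex.re_ofReal_mul]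
    rw [h1]; exact hnn x
  have hexp : ∀ a b : H, q (a + b) = q a + 2 * (⟪G a, b⟫ : ℂ).re + q b :=
    fun a b => aux_expand G hGsa a b
  have hexp_t : ∀ (a b : H) (t : ℝ),
      q (a + (t:ℂ) • b) = q a + 2 * t * (⟪G a, b⟫ : ℂ).re + t^2 * q b := by
    intro a b t
    rw [hexp]
    have h1 : (⟪G a, (t:ℂ) • b⟫ : ℂ).re = t * (⟪G a, b⟫ : ℂ).re := by
      rw [inner_smul_right, Complex.re_ofReal_mul]
    have h2 : q ((t:ℂ) • b) = t^2 * q b := by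
      rw [hq]
      simp only [map_smul, inner_smul_left, inner_smul_right, Complex.conj_ofReal]
      rw [← mul_assoc, ← Complex.ofReal_mul, Complex.re_ofReal_mul]
      ring
    rw [h1, h2]; ring
  -- ‖G x‖² ≤ ‖G‖ * q x
  have hCS : ∀ x, ‖G x‖^2 ≤ ‖G‖ * q x := by
    intro x
    have hGx2 : (⟪G x, G x⟫ : ℂ).re = ‖G x‖^2 := by
      have h00 : (⟪G x, G x⟫ : ℂ) = ((‖G x‖^2 : ℝ) : ℂ) := by
        have := inner_self_eq_norm_sq_to_K (𝕜 := ℂ) (G x)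
        rw [this]; norm_cast
      rw [h00, Complex.ofReal_re]
    have hdisc : ∀ t : ℝ, 0 ≤ (q (G x)) * (t*t) + (2*‖G x‖^2) * t + q x := by
      intro t
      have h0 := hq0 (x + (t:ℂ) • G x)
      rw [hexp_t, hGx2] at h0
      nlinarith [h0]
    have hd := discrim_le_zero hdisc
    rw [discrim] at hd
    have hqGx : q (G x) ≤ ‖G‖ * (‖G x‖ * ‖G x‖) := by
      have h2 : q (G x) ≤ ‖(⟪G (G x), G x⟫ : ℂ)‖ := by
        rw [hq]
        exact Complex.re_le_norm _
      have h3 := norm_inner_le_norm (𝕜 := ℂ) (G (G x)) (G x)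
      have h4 := G.le_opNorm (G x)
      nlinarith [norm_nonneg (G x), norm_nonneg (G (G x))]
    rcases eq_or_lt_of_le (norm_nonneg (G x)) with h0 | h0
    · rw [← h0]
      simp only [ne_eq, OfNat.ofNat_ne_zero, not_false_eq_true, zero_pow]
      exact mul_nonneg (norm_nonneg _) (hq0 x)
    · have h5 : q (G x) * q x ≤ (‖G‖ * (‖G x‖ * ‖G x‖)) * q x :=
        mul_le_mul_of_nonneg_right hqGx (hq0 x)
      nlinarith [h5, hd, mul_pos h0 h0, hq0 x, norm_nonneg G]
  -- the closed submodule X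
  set Z : Submodule ℂ E := Submodule.map (V : H →ₗ[ℂ] E) (LinearMap.ker (G : H →ₗ[ℂ] H)) with hZ
  have hZset : (Z : Set E) = V '' ((LinearMap.ker (G : H →ₗ[ℂ] H) : Submodule ℂ H) : Set H) := by
    rw [hZ]; rfl
  have hZclosed : IsClosed (Z : Set E) := by
    rw [hZset]
    exact aux_VkerG_closed JK hJK2 JE T V hT ρ hclosedR
  set X : Submodule ℂ H := Submodule.comap (V : H →ₗ[ℂ] E) Z with hX
  have hXclosed : IsClosed (X : Set H) := by
    have : (X : Set H) = ⇑V ⁻¹' (Z : Set E) := rfl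
    rw [this]
    exact hZclosed.preimage V.continuous
  have hNX : ∀ n : H, V n = 0 → n ∈ X := by
    intro n hn
    rw [hX]
    refine Submodule.mem_comap.mpr ?_
    show V n ∈ Z
    rw [hn]
    exact Z.zero_mem
  have hkerGX : LinearMap.ker (G : H →ₗ[ℂ] H) ≤ X := by
    intro g hg
    refine Submodule.mem_comap.mpr ?_
    exact Submodule.mem_map_of_mem hg
  -- G(X) is closed
  have hGrange : IsClosed (Set.range G) := by
    rw [hG]
    exact aux_rangeG_closed JK hJKsa hJK2 JE hJEsa hJE2 T V ρ hρ hclosedR hpr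
  have hGXclosed : IsClosed (G '' (X : Set H)) :=
    aux_image_closed G hGrange X hXclosed hkerGX
  -- minimization over x₀ + X
  obtain ⟨x₀, hx₀⟩ := hV z₀
  set QS : Set ℝ := (fun ξ => q (x₀ + ξ)) '' (X : Set H) with hQS
  have hQSne : QS.Nonempty := ⟨q x₀, 0, X.zero_mem, by simp⟩
  have hQSbdd : BddBelow QS := by
    refine ⟨0, ?_⟩
    rintro r ⟨ξ, hξ, rfl⟩
    exact hq0 _
  set d : ℝ := sInf QS with hd
  have hd_le : ∀ ξ ∈ X, d ≤ q (x₀ + ξ) := fun ξ hξ => csInf_le hQSbdd ⟨ξ, hξ, rfl⟩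
  have hseq : ∀ n : ℕ, ∃ ξ ∈ X, q (x₀ + ξ) < d + 1/((n:ℝ)+1) := by
    intro n
    have hlt : d < d + 1/((n:ℝ)+1) := lt_add_of_pos_right d (by positivity)
    obtain ⟨r, hr, hrlt⟩ := exists_lt_of_csInf_lt hQSne hlt
    obtain ⟨ξ, hξ, rfl⟩ := hr
    exact ⟨ξ, hξ, hrlt⟩
  choose ξ hξX hξq using hseq
  set xx : ℕ → H := fun n => x₀ + ξ n with hxx
  have hxxd : ∀ n, d ≤ q (xx n) := fun n => hd_le _ (hξX n)
  -- parallelogram estimate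
  have hpar : ∀ n m, q (xx n - xx m) ≤ 2 * q (xx n) + 2 * q (xx m) - 4 * d := by
    intro n m
    have hmid : d ≤ q (x₀ + ((2:ℂ)⁻¹ • (ξ n + ξ m))) :=
      hd_le _ (X.smul_mem _ (X.add_mem (hξX n) (hξX m)))
    set mid : H := (2:ℂ)⁻¹ • (ξ n + ξ m) with hmd
    have hsum : xx n + xx m = (x₀ + mid) + (x₀ + mid) := by
      have h2 : mid + mid = ξ n + ξ m := by
        rw [hmd, ← add_smul]; norm_num
      have h3 : (x₀ + mid) + (x₀ + mid) = x₀ + x₀ + (mid + mid) := by abel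
      rw [h3, h2]
      show x₀ + ξ n + (x₀ + ξ m) = x₀ + x₀ + (ξ n + ξ m)
      abel
    have hqre : ∀ y : H, (⟪G y, y⟫ : ℂ).re = q y := fun y => rfl
    have hqsum : 4 * d ≤ q (xx n + xx m) := by
      rw [hsum, hexp, hqre]
      linarith [hmid]
    have he1 := hexp (xx n) (xx m)
    have he2 : q (xx n - xx m) = q (xx n) - 2 * (⟪G (xx n), xx m⟫ : ℂ).re + q (xx m) := by
      have h3 := hexp (xx n) (-(xx m))
      have h4 : q (-(xx m)) = q (xx m) := by
        rw [hq]; simp only [map_neg, inner_neg_neg]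
      have h5 : (⟪G (xx n), -(xx m)⟫ : ℂ).re = -(⟪G (xx n), xx m⟫ : ℂ).re := by
        rw [inner_neg_right, Complex.neg_re]
      rw [sub_eq_add_neg, h3, h4, h5]
      ring
    linarith [he1, he2, hqsum]
  -- G xx is Cauchy
  have hGCau : CauchySeq (fun n => G (xx n)) := by
    refine cauchySeq_of_le_tendsto_0 (fun N => Real.sqrt (‖G‖ * (4/((N:ℝ)+1)))) ?_ ?_
    · intro n m N hn hm
      rw [dist_eq_norm, ← map_sub]
      have h1 : ‖G (xx n - xx m)‖^2 ≤ ‖G‖ * (4/((N:ℝ)+1)) := by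
        have h2 := hCS (xx n - xx m)
        have h3 : q (xx n - xx m) ≤ 4/((N:ℝ)+1) := by
          have h4 : (1:ℝ)/((n:ℝ)+1) ≤ 1/((N:ℝ)+1) := by
            apply one_div_le_one_div_of_le (by positivity)
            have : (N:ℝ) ≤ (n:ℝ) := by exact_mod_cast hn
            linarith
          have h5 : (1:ℝ)/((m:ℝ)+1) ≤ 1/((N:ℝ)+1) := by
            apply one_div_le_one_div_of_le (by positivity)
            have : (N:ℝ) ≤ (m:ℝ) := by exact_mod_cast hm
            linarith
          have h6 := hpar n m
          have h7 : q (xx n) < d + 1/((n:ℝ)+1) := hξq n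
          have h8 : q (xx m) < d + 1/((m:ℝ)+1) := hξq m
          have h10 : (4:ℝ)/((N:ℝ)+1) = 4 * (1/((N:ℝ)+1)) := by ring
          rw [h10]
          linarith [hxxd n, hxxd m]
        calc ‖G (xx n - xx m)‖^2 ≤ ‖G‖ * q (xx n - xx m) := h2
          _ ≤ ‖G‖ * (4/((N:ℝ)+1)) := by
              apply mul_le_mul_of_nonneg_left h3 (norm_nonneg _)
      have h9 : ‖G (xx n - xx m)‖ = Real.sqrt (‖G (xx n - xx m)‖^2) :=
        (Real.sqrt_sq (norm_nonneg _)).symm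
      rw [h9]
      exact Real.sqrt_le_sqrt h1
    · have hb0 : Filter.Tendsto (fun N : ℕ => ‖G‖ * (4/((N:ℝ)+1))) Filter.atTop (nhds 0) := by
        have h1 := tendsto_one_div_add_atTop_nhds_zero_nat (𝕜 := ℝ)
        have h2 := h1.const_mul (‖G‖ * 4)
        rw [mul_zero] at h2
        convert h2 using 2 with N
        field_simp
      have h3 := (Real.continuous_sqrt.tendsto 0).comp hb0
      rw [Real.sqrt_zero] at h3
      exact h3
  obtain ⟨v, hv⟩ := cauchySeq_tendsto_of_complete hGCau
  -- v - G x₀ ∈ G(X)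
  have hvG : v - G x₀ ∈ G '' (X : Set H) := by
    have h1 : Filter.Tendsto (fun n => G (ξ n)) Filter.atTop (nhds (v - G x₀)) := by
      have h2 : (fun n => G (ξ n)) = fun n => G (xx n) - G x₀ := by
        funext n
        rw [hxx]
        simp only [map_add]
        abel
      rw [h2]
      exact hv.sub tendsto_const_nhds
    exact hGXclosed.mem_of_tendsto h1 (Filter.Eventually.of_forall fun n => ⟨ξ n, hξX n, rfl⟩)
  obtain ⟨ξ', hξ'X, hξ'⟩ := hvG
  set xt' : H := x₀ + ξ' with hxt'
  have hGxt' : G xt' = v := by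
    rw [hxt', map_add, hξ']
    abel
  -- first-order condition
  have hfo : ∀ nn ∈ X, (⟪v, nn⟫ : ℂ) = 0 := by
    have key : ∀ nn ∈ X, (⟪v, nn⟫ : ℂ).re = 0 := by
      intro nn hnn
      have hb : ∀ k : ℕ, ((⟪G (xx k), nn⟫ : ℂ).re)^2 ≤ (q nn) * (1/((k:ℝ)+1)) := by
        intro k
        have hquad : ∀ t : ℝ, 0 ≤ (q nn) * (t*t) + (2*(⟪G (xx k), nn⟫ : ℂ).re) * t
            + (q (xx k) - d) := by
          intro t
          have hmem : ξ k + (t:ℂ) • nn ∈ X := X.add_mem (hξX k) (X.smul_mem _ hnn)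
          have h1 := hd_le _ hmem
          have h2 : x₀ + (ξ k + (t:ℂ) • nn) = xx k + (t:ℂ) • nn := by
            exact (add_assoc _ _ _).symm
          rw [h2, hexp_t] at h1
          nlinarith [h1]
        have hd2 := discrim_le_zero hquad
        rw [discrim] at hd2
        have hqk : q (xx k) - d < 1/((k:ℝ)+1) := by
          have h9 : q (xx k) < d + 1/((k:ℝ)+1) := hξq k
          linarith
        nlinarith [hq0 nn, hxxd k]
      have h1 : Filter.Tendsto (fun k => (⟪G (xx k), nn⟫ : ℂ).re) Filter.atTop
          (nhds ((⟪v, nn⟫ : ℂ).re)) := by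
        have h2 : Filter.Tendsto (fun k => (⟪G (xx k), nn⟫ : ℂ)) Filter.atTop
            (nhds (⟪v, nn⟫ : ℂ)) := by
          apply Filter.Tendsto.inner hv tendsto_const_nhds
        exact (Complex.continuous_re.tendsto _).comp h2
      have h3 : Filter.Tendsto (fun k => (⟪G (xx k), nn⟫ : ℂ).re) Filter.atTop (nhds 0) := by
        have hb0 : Filter.Tendsto (fun k : ℕ => (q nn) * (1/((k:ℝ)+1))) Filter.atTop
            (nhds 0) := by
          have h4 := tendsto_one_div_add_atTop_nhds_zero_nat (𝕜 := ℝ)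
          have h5 := h4.const_mul (q nn)
          rw [mul_zero] at h5
          exact h5
        have h6 := (Real.continuous_sqrt.tendsto 0).comp hb0
        rw [Real.sqrt_zero] at h6
        refine squeeze_zero_norm (fun k => ?_) h6
        rw [Real.norm_eq_abs, ← Real.sqrt_sq_eq_abs]
        exact Real.sqrt_le_sqrt (hb k)
      exact tendsto_nhds_unique h1 h3
    intro nn hnn
    have h1 := key nn hnn
    have h2 := key (Complex.I • nn) (X.smul_mem _ hnn)
    rw [inner_smul_right] at h2
    apply Complex.ext
    · exact h1
    · have h3 : (Complex.I * ⟪v, nn⟫).re = -(⟪v, nn⟫ : ℂ).im := by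
        rw [Complex.mul_re]
        simp
      rw [h3] at h2
      simpa using h2
  -- correct for the constraint
  have hVξ' : V ξ' ∈ Z := Submodule.mem_comap.mp hξ'X
  obtain ⟨g, hg, hgV⟩ := hVξ'
  have hgV' : V g = V ξ' := hgV
  have hgker : G g = 0 := hg
  set xt : H := xt' - g with hxt
  have hVxt : V xt = z₀ := by
    rw [hxt, hxt', map_sub, map_add, hx₀, hgV']
    abel
  have hGxt : G xt = v := by
    rw [hxt, map_sub, hGxt', hgker, sub_zero]
  refine ⟨xt, hVxt, ?_⟩
  intro x hVx
  have hnker : V (x - xt) = 0 := by rw [map_sub, hVx, hVxt, sub_self]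
  have hnX : x - xt ∈ X := hNX _ hnker
  -- A-quadratic expansion
  set A : H →L[ℂ] H := (ContinuousLinearMap.adjoint T) ∘L JK ∘L T with hA
  have hAsa : IsSelfAdjoint A := by
    have hK : ContinuousLinearMap.adjoint JK = JK := by
      rw [← ContinuousLinearMap.star_eq_adjoint]; exact hJKsa.star_eq
    rw [IsSelfAdjoint, ContinuousLinearMap.star_eq_adjoint, hA,
      ContinuousLinearMap.adjoint_comp, ContinuousLinearMap.adjoint_comp,
      ContinuousLinearMap.adjoint_adjoint, hK, ContinuousLinearMap.comp_assoc]
  have hAinner : ∀ a b : H, (⟪A a, b⟫ : ℂ) = ⟪JK (T a), T b⟫ := by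
    intro a b
    rw [hA]
    simp only [ContinuousLinearMap.comp_apply]
    rw [ContinuousLinearMap.adjoint_inner_left]
  have hAz : (⟪A xt, x - xt⟫ : ℂ) = 0 := by
    have h1 : (⟪G xt, x - xt⟫ : ℂ) = 0 := by
      rw [hGxt]
      exact hfo _ hnX
    rw [hGinner] at h1
    rw [hnker, inner_zero_right, mul_zero, add_zero] at h1
    rw [hAinner]
    exact h1
  have hposn : 0 ≤ (⟪A (x - xt), x - xt⟫ : ℂ).re := by
    rw [hAinner]
    have h := hnn (x - xt)
    rw [hnker, inner_zero_right] at h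
    simpa using h
  have hfin := aux_expand A hAsa xt (x - xt)
  have hxeq : xt + (x - xt) = x := by abel
  rw [hxeq, hAz] at hfin
  have hgoal : (⟪A xt, xt⟫ : ℂ).re ≤ (⟪A x, x⟫ : ℂ).re := by
    rw [hfin]
    simp only [Complex.zero_re]
    linarith [hposn]
  rw [← hAinner, ← hAinner]
  exact hgoal
end
end

section
/- Let ρ ∈ ℝ, ρ ≠ 0, and assume [Tx,Tx]_K + ρ·[Vx,Vx]_E ≥ 0 for every x ∈ H (i.e. R(L) is nonnegative with respect to [·,·]_ρ). If z₀ ∈ E is such that sm(ρ,z₀) ≠ ∅, then there exists w₀ ∈ E such that sp(w₀) ≠ ∅ and sp(w₀) ⊆ sm(ρ,z₀). (In fact, w₀ := Vx₀ works for any x₀ ∈ sm(ρ,z₀).) -/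
open scoped ComplexInnerProductSpace Pointwise

noncomputable section

variable {H K E : Type*}
  [NormedAddCommGroup H] [InnerProductSpace ℂ H] [CompleteSpace H]
  [NormedAddCommGroup K] [InnerProductSpace ℂ K] [CompleteSpace K]
  [NormedAddCommGroup E] [InnerProductSpace ℂ E] [CompleteSpace E]

theorem stmt17
    (JK : K →L[ℂ] K) (hJKsa : IsSelfAdjoint JK) (hJK2 : JK ∘L JK = 1)
    (JE : E →L[ℂ] E) (hJEsa : IsSelfAdjoint JE) (hJE2 : JE ∘L JE = 1)
    (T : H →L[ℂ] K) (V : H →L[ℂ] E)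
    (hT : Function.Surjective T) (hV : Function.Surjective V)
    (ρ : ℝ) (hρ : ρ ≠ 0)
    (hnn : ∀ x : H, 0 ≤ (⟪JK (T x), T x⟫).re + ρ * (⟪JE (V x), V x⟫).re)
    (z₀ : E) (hz : (smSet JK JE T V ρ z₀).Nonempty) :
    (∃ w₀ : E, (spSet JK T V w₀).Nonempty ∧
      spSet JK T V w₀ ⊆ smSet JK JE T V ρ z₀) ∧
    (∀ x₀ ∈ smSet JK JE T V ρ z₀,
      (spSet JK T V (V x₀)).Nonempty ∧
        spSet JK T V (V x₀) ⊆ smSet JK JE T V ρ z₀) := by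
  have key : ∀ x₀ ∈ smSet JK JE T V ρ z₀,
      (spSet JK T V (V x₀)).Nonempty ∧ spSet JK T V (V x₀) ⊆ smSet JK JE T V ρ z₀ := by
    intro x₀ hx₀
    constructor
    · refine ⟨x₀, rfl, fun x hx => ?_⟩
      have h1 := hx₀ x
      rw [hx] at h1
      linarith
    · rintro xt ⟨hVxt, hmin⟩ x
      have h1 := hx₀ x
      have h2 := hmin x₀ rfl
      rw [hVxt]
      linarith
  obtain ⟨x₀, hx₀⟩ := hz
  exact ⟨⟨V x₀, key x₀ hx₀⟩, key⟩
end
end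

section
/- Let ρ ∈ ℝ, ρ ≠ 0, and assume [Tx,Tx]_K + ρ·[Vx,Vx]_E ≥ 0 for every x ∈ H (i.e. R(L) is nonnegative with respect to [·,·]_ρ). If w₀ ∈ E is such that sp(w₀) ≠ ∅, then there exists z₀ ∈ E such that sp(w₀) ⊆ sm(ρ,z₀). -/
open scoped ComplexInnerProductSpace Pointwise

noncomputable section

variable {H K E : Type*}
  [NormedAddCommGroup H] [InnerProductSpace ℂ H] [CompleteSpace H]
  [NormedAddCommGroup K] [InnerProductSpace ℂ K] [CompleteSpace K]
  [NormedAddCommGroup E] [InnerProductSpace ℂ E] [CompleteSpace E]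

lemma aux_inner_J_add_re (J : K →L[ℂ] K) (hJ : IsSelfAdjoint J) (a b : K) :
    (⟪J (a + b), a + b⟫).re = (⟪J a, a⟫).re + (⟪J b, b⟫).re + 2 * (⟪J a, b⟫).re := by
  have hba : ⟪J b, a⟫ = (starRingEnd ℂ) ⟪J a, b⟫ := by
    rw [← inner_conj_symm, ← ContinuousLinearMap.adjoint_inner_right J, hJ.adjoint_eq]
  have : ⟪J (a + b), a + b⟫ = ⟪J a, a⟫ + ⟪J b, b⟫ + (⟪J a, b⟫ + (starRingEnd ℂ) ⟪J a, b⟫) := by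
    rw [map_add, inner_add_left, inner_add_right, inner_add_right, hba]; ring
  rw [this]
  simp only [Complex.add_re, Complex.conj_re]
  ring

lemma aux_exists_adjoint_preimage (V : H →L[ℂ] E) (hV : Function.Surjective V) (u : H)
    (hu : ∀ n : H, V n = 0 → ⟪u, n⟫ = 0) :
    ∃ e : E, ContinuousLinearMap.adjoint V e = u := by
  obtain ⟨C, hC0, hC⟩ := ContinuousLinearMap.exists_preimage_norm_le V hV
  have hbound : ∀ z : E, ‖z‖ ≤ Real.toNNReal C * ‖ContinuousLinearMap.adjoint V z‖ := by
    intro z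
    rcases eq_or_ne z 0 with rfl | hz
    · simp
    obtain ⟨x, hx, hxn⟩ := hC z
    have h1 : (‖z‖ : ℝ) * ‖z‖ ≤ ‖x‖ * ‖ContinuousLinearMap.adjoint V z‖ := by
      have : (⟪z, z⟫ : ℂ).re = (⟪x, ContinuousLinearMap.adjoint V z⟫ : ℂ).re := by
        rw [ContinuousLinearMap.adjoint_inner_right, hx]
      calc ‖z‖ * ‖z‖ = (⟪z, z⟫ : ℂ).re := (inner_self_eq_norm_mul_norm (𝕜 := ℂ) z).symm
        _ = (⟪x, ContinuousLinearMap.adjoint V z⟫ : ℂ).re := this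
        _ ≤ ‖(⟪x, ContinuousLinearMap.adjoint V z⟫ : ℂ)‖ := Complex.re_le_norm _
        _ ≤ ‖x‖ * ‖ContinuousLinearMap.adjoint V z‖ := norm_inner_le_norm _ _
    have h2 : ‖z‖ * ‖z‖ ≤ (C * ‖z‖) * ‖ContinuousLinearMap.adjoint V z‖ :=
      h1.trans (mul_le_mul_of_nonneg_right hxn (norm_nonneg _))
    have hzpos : (0:ℝ) < ‖z‖ := norm_pos_iff.mpr hz
    have hle : ‖z‖ ≤ C * ‖ContinuousLinearMap.adjoint V z‖ :=
      (mul_le_mul_iff_of_pos_right hzpos).mp (by linarith [h2])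
    rw [Real.coe_toNNReal C hC0.le]
    exact hle
  have hanti := (ContinuousLinearMap.adjoint V).antilipschitz_of_bound hbound
  have hclosed : IsClosed (Set.range (ContinuousLinearMap.adjoint V)) :=
    hanti.isClosed_range (ContinuousLinearMap.adjoint V).uniformContinuous
  set R : Submodule ℂ H := LinearMap.range (ContinuousLinearMap.adjoint V : E →ₗ[ℂ] H)
  have hRclosed : IsClosed (R : Set H) := by
    have : (R : Set H) = Set.range (ContinuousLinearMap.adjoint V) := by
      ext x; simp [R, LinearMap.mem_range, Set.mem_range]
    rw [this]; exact hclosed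
  have hRR : Rᗮᗮ = R := by
    rw [Submodule.orthogonal_orthogonal_eq_closure, hRclosed.submodule_topologicalClosure_eq]
  have humem : u ∈ Rᗮᗮ := by
    intro v hv
    have hVv : V v = 0 := by
      have h0 : (⟪ContinuousLinearMap.adjoint V (V v), v⟫ : ℂ) = 0 :=
        hv _ (LinearMap.mem_range_self _ _)
      rw [ContinuousLinearMap.adjoint_inner_left] at h0
      exact inner_self_eq_zero.mp h0
    have := hu v hVv
    rw [← inner_conj_symm, this, map_zero]
  rw [hRR] at humem
  exact humem

theorem stmt18
    (JK : K →L[ℂ] K) (hJKsa : IsSelfAdjoint JK) (hJK2 : JK ∘L JK = 1)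
    (JE : E →L[ℂ] E) (hJEsa : IsSelfAdjoint JE) (hJE2 : JE ∘L JE = 1)
    (T : H →L[ℂ] K) (V : H →L[ℂ] E)
    (hT : Function.Surjective T) (hV : Function.Surjective V)
    (ρ : ℝ) (hρ : ρ ≠ 0)
    (hnn : ∀ x : H, 0 ≤ (⟪JK (T x), T x⟫).re + ρ * (⟪JE (V x), V x⟫).re)
    (w₀ : E) (hw : (spSet JK T V w₀).Nonempty) :
    ∃ z₀ : E, spSet JK T V w₀ ⊆ smSet JK JE T V ρ z₀ := by
  obtain ⟨x₀, hVx₀, hmin₀⟩ := hw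
  -- Step 1: the cross term vanishes on `ker V`.
  have hker : ∀ n : H, V n = 0 → (⟪JK (T x₀), T n⟫ : ℂ) = 0 := by
    intro n hn
    set c : ℂ := ⟪JK (T x₀), T n⟫ with hc
    by_contra hcne
    have hd : 0 ≤ (⟪JK (T n), T n⟫ : ℂ).re := by
      have := hnn n
      rw [hn] at this
      simpa using this
    set d := (⟪JK (T n), T n⟫ : ℂ).re with hdd
    have key : ∀ lam : ℂ, 0 ≤ 2 * (lam * c).re + Complex.normSq lam * d := by
      intro lam
      have hVc : V (x₀ + lam • n) = w₀ := by
        rw [map_add, map_smul, hn, smul_zero, add_zero, hVx₀]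
      have h := hmin₀ (x₀ + lam • n) hVc
      have h1 : T (x₀ + lam • n) = T x₀ + lam • T n := by rw [map_add, map_smul]
      rw [h1, aux_inner_J_add_re JK hJKsa] at h
      have h2 : (⟪JK (lam • T n), lam • T n⟫ : ℂ).re = Complex.normSq lam * d := by
        rw [map_smul, inner_smul_left, inner_smul_right, ← mul_assoc,
          mul_comm ((starRingEnd ℂ) lam) lam, Complex.mul_conj]
        simp [hdd]
      have h3 : (⟪JK (T x₀), lam • T n⟫ : ℂ) = lam * c := by
        rw [inner_smul_right, hc]
      rw [h2, h3] at h
      linarith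
    set nc := Complex.normSq c with hnc
    have hncpos : 0 < nc := by
      rw [hnc]
      exact Complex.normSq_pos.mpr hcne
    set t : ℝ := 1 / (d + 1) with ht
    have htpos : 0 < t := by
      rw [ht]; positivity
    have htd : t * d < 1 := by
      rw [ht]
      rw [div_mul_eq_mul_div, div_lt_one (by linarith)]
      linarith
    have hk := key (-(t : ℂ) * (starRingEnd ℂ) c)
    have e1 : (-(t : ℂ) * (starRingEnd ℂ) c * c).re = -(t * nc) := by
      rw [mul_assoc, mul_comm ((starRingEnd ℂ) c) c, Complex.mul_conj, ← hnc]
      simp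
    have e2 : Complex.normSq (-(t : ℂ) * (starRingEnd ℂ) c) = t ^ 2 * nc := by
      rw [map_mul, Complex.normSq_conj, ← hnc, Complex.normSq_neg, Complex.normSq_ofReal]
      ring
    rw [e1, e2] at hk
    have htn : 0 < t * nc := mul_pos htpos hncpos
    have h5 : t ^ 2 * nc * d < t * nc := by
      have : t ^ 2 * nc * d = (t * nc) * (t * d) := by ring
      rw [this]
      calc (t * nc) * (t * d) < (t * nc) * 1 := by
            exact mul_lt_mul_of_pos_left htd htn
        _ = t * nc := mul_one _
    linarith
  -- Step 2: find `e` with `V* e = T* (JK (T x₀))`.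
  have hu : ∀ n : H, V n = 0 → (⟪ContinuousLinearMap.adjoint T (JK (T x₀)), n⟫ : ℂ) = 0 := by
    intro n hn
    rw [ContinuousLinearMap.adjoint_inner_left]
    exact hker n hn
  obtain ⟨e, he⟩ := aux_exists_adjoint_preimage V hV _ hu
  refine ⟨w₀ + (ρ : ℂ)⁻¹ • JE e, ?_⟩
  set z₀ : E := w₀ + (ρ : ℂ)⁻¹ • JE e with hz₀
  -- first-order condition at x₀
  have hJEe : JE (JE e) = e := by
    have := congrArg (fun (A : E →L[ℂ] E) => A e) hJE2
    simpa using this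
  have hcross : ∀ y : H, (⟪JK (T x₀), T y⟫ : ℂ) + (ρ : ℂ) * ⟪JE (V x₀ - z₀), V y⟫ = 0 := by
    intro y
    have hv : V x₀ - z₀ = -((ρ : ℂ)⁻¹ • JE e) := by
      rw [hVx₀, hz₀]; abel
    have hJEv : JE (V x₀ - z₀) = -((ρ : ℂ)⁻¹ • e) := by
      rw [hv, map_neg, map_smul, hJEe]
    rw [hJEv, inner_neg_left, inner_smul_left]
    have hconj : (starRingEnd ℂ) ((ρ : ℂ)⁻¹) = (ρ : ℂ)⁻¹ := by
      rw [map_inv₀, Complex.conj_ofReal]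
    rw [hconj]
    have hρC : (ρ : ℂ) ≠ 0 := by exact_mod_cast hρ
    have heV : (⟪e, V y⟫ : ℂ) = ⟪JK (T x₀), T y⟫ := by
      rw [← ContinuousLinearMap.adjoint_inner_left V, he,
        ContinuousLinearMap.adjoint_inner_left]
    field_simp [heV]
    simp [heV]
  -- Step 3: conclusion
  intro xt hxt
  obtain ⟨hVxt, hminxt⟩ := hxt
  intro x
  have hsame : (⟪JK (T xt), T xt⟫ : ℂ).re = (⟪JK (T x₀), T x₀⟫ : ℂ).re :=
    le_antisymm (hminxt x₀ hVx₀) (hmin₀ xt hVxt)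
  have hVsame : V xt - z₀ = V x₀ - z₀ := by rw [hVxt, hVx₀]
  -- expand F(x) around x₀
  have hb : T x = T x₀ + T (x - x₀) := by rw [map_sub]; abel
  have hq : V x - z₀ = (V x₀ - z₀) + V (x - x₀) := by rw [map_sub]; abel
  have hnn' := hnn (x - x₀)
  have hc0 := hcross (x - x₀)
  have hcre : (⟪JK (T x₀), T (x - x₀)⟫ : ℂ).re
      + ρ * (⟪JE (V x₀ - z₀), V (x - x₀)⟫ : ℂ).re = 0 := by
    have := congrArg Complex.re hc0
    simpa [Complex.add_re, Complex.mul_re, Complex.ofReal_re, Complex.ofReal_im] using this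
  have hFx : (⟪JK (T x), T x⟫ : ℂ).re + ρ * (⟪JE (V x - z₀), V x - z₀⟫ : ℂ).re
      = ((⟪JK (T x₀), T x₀⟫ : ℂ).re + ρ * (⟪JE (V x₀ - z₀), V x₀ - z₀⟫ : ℂ).re)
        + ((⟪JK (T (x - x₀)), T (x - x₀)⟫ : ℂ).re
            + ρ * (⟪JE (V (x - x₀)), V (x - x₀)⟫ : ℂ).re)
        + 2 * ((⟪JK (T x₀), T (x - x₀)⟫ : ℂ).re
            + ρ * (⟪JE (V x₀ - z₀), V (x - x₀)⟫ : ℂ).re) := by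
    rw [hb, hq, aux_inner_J_add_re JK hJKsa, aux_inner_J_add_re JE hJEsa]
    ring
  rw [hsame, hVsame]
  rw [hFx, hcre]
  linarith
end
end

section
/- Let ρ ∈ ℝ, ρ ≠ 0. Assume R(L) is a positive subspace for [·,·]_ρ, i.e. [Tx,Tx]_K + ρ·[Vx,Vx]_E > 0 whenever (Tx,Vx) ≠ (0,0), and that R(L) is nondegenerate, i.e. R(L) ∩ R(L)^[⊥] = {0}. Then: (1) for every z₀ ∈ E with sm(ρ,z₀) ≠ ∅ there exists w₀ ∈ E such that sp(w₀) = sm(ρ,z₀) and this set is nonempty; (2) for every w₀ ∈ E with sp(w₀) ≠ ∅ there exists z₀ ∈ E such that sp(w₀) = sm(ρ,z₀). -/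
open scoped ComplexInnerProductSpace Pointwise

noncomputable section

variable {H K E : Type*}
  [NormedAddCommGroup H] [InnerProductSpace ℂ H] [CompleteSpace H]
  [NormedAddCommGroup K] [InnerProductSpace ℂ K] [CompleteSpace K]
  [NormedAddCommGroup E] [InnerProductSpace ℂ E] [CompleteSpace E]

section AuxLemmas

variable {K' : Type*} [NormedAddCommGroup K'] [InnerProductSpace ℂ K'] [CompleteSpace K']

lemma auxSym (J : K' →L[ℂ] K') (hJ : IsSelfAdjoint J) (a b : K') :
    ⟪J a, b⟫ = (starRingEnd ℂ) ⟪J b, a⟫ := by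
  have h := ContinuousLinearMap.isSelfAdjoint_iff'.mp hJ
  calc ⟪J a, b⟫ = ⟪a, J b⟫ := by
        rw [← h, ContinuousLinearMap.adjoint_inner_left, h]
    _ = (starRingEnd ℂ) ⟪J b, a⟫ := (inner_conj_symm _ _).symm

lemma auxExpand (J : K' →L[ℂ] K') (hJ : IsSelfAdjoint J) (y d : K') (c : ℂ) :
    (⟪J (y + c • d), y + c • d⟫).re
      = (⟪J y, y⟫).re + 2 * ((starRingEnd ℂ) c * ⟪J d, y⟫).re
        + Complex.normSq c * (⟪J d, d⟫).re := by
  have e3 : (⟪J d, d⟫ : ℂ).im = 0 := by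
    have h := congrArg Complex.im (auxSym J hJ d d)
    simp at h
    have h2 : (⟪d, J d⟫ : ℂ).im = -(⟪J d, d⟫ : ℂ).im := by
      conv_lhs => rw [← inner_conj_symm]
      exact Complex.conj_im _
    linarith
  rw [map_add, map_smul, inner_add_left, inner_add_right, inner_add_right,
    inner_smul_left, inner_smul_right, inner_smul_right, inner_smul_left]
  simp only [Complex.add_re, Complex.mul_re, Complex.normSq_apply, Complex.conj_re,
    Complex.conj_im, Complex.mul_im, auxSym J hJ y d]
  rw [e3]
  ring

lemma auxZero (γ : ℝ) (hγ : 0 ≤ γ) (β : ℂ)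
    (h : ∀ c : ℂ, 0 ≤ 2 * ((starRingEnd ℂ) c * β).re + Complex.normSq c * γ) : β = 0 := by
  by_contra hβ
  have hn : 0 < Complex.normSq β := Complex.normSq_pos.mpr hβ
  have hεpos : 0 < 1 / (1 + γ) := by positivity
  set ε : ℝ := 1 / (1 + γ) with hεdef
  have hεγ : ε * (1 + γ) = 1 := by
    rw [hεdef]; field_simp
  have hc := h ((-ε : ℝ) • β)
  have h1 : ((starRingEnd ℂ) ((-ε : ℝ) • β) * β).re = -ε * Complex.normSq β := by
    simp [Complex.normSq_apply, Complex.mul_re, Complex.conj_re, Complex.conj_im]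
    ring
  have h2 : Complex.normSq ((-ε : ℝ) • β) = ε ^ 2 * Complex.normSq β := by
    simp [Complex.normSq_apply]
    ring
  rw [h1, h2] at hc
  nlinarith [mul_pos hεpos hn, sq_nonneg ε, mul_pos (mul_pos hεpos hεpos) hn]

end AuxLemmas

theorem stmt19
    (JK : K →L[ℂ] K) (hJKsa : IsSelfAdjoint JK) (hJK2 : JK ∘L JK = 1)
    (JE : E →L[ℂ] E) (hJEsa : IsSelfAdjoint JE) (hJE2 : JE ∘L JE = 1)
    (T : H →L[ℂ] K) (V : H →L[ℂ] E)
    (hT : Function.Surjective T) (hV : Function.Surjective V)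
    (ρ : ℝ) (hρ : ρ ≠ 0)
    (hposR : ∀ x : H, (T x, V x) ≠ (0, 0) →
      0 < (⟪JK (T x), T x⟫).re + ρ * (⟪JE (V x), V x⟫).re)
    (hnd : Set.range (fun x : H => (T x, V x)) ∩ RLperp JK JE T V ρ = {0}) :
    (∀ z₀ : E, (smSet JK JE T V ρ z₀).Nonempty →
      ∃ w₀ : E, (spSet JK T V w₀).Nonempty ∧ spSet JK T V w₀ = smSet JK JE T V ρ z₀) ∧
    (∀ w₀ : E, (spSet JK T V w₀).Nonempty →
      ∃ z₀ : E, spSet JK T V w₀ = smSet JK JE T V ρ z₀) := by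
  classical
  -- the quadratic form
  set q : H → ℝ := fun d => (⟪JK (T d), T d⟫).re + ρ * (⟪JE (V d), V d⟫).re with hqdef
  have hq0 : ∀ d : H, 0 ≤ q d := by
    intro d
    by_cases hd : (T d, V d) = ((0 : K), (0 : E))
    · have h1 : T d = 0 := congrArg Prod.fst hd
      have h2 : V d = 0 := congrArg Prod.snd hd
      simp [hqdef, h1, h2]
    · exact le_of_lt (hposR d hd)
  have hqz : ∀ d : H, q d ≤ 0 → T d = 0 ∧ V d = 0 := by
    intro d hle
    by_contra hcon
    have hne : (T d, V d) ≠ ((0 : K), (0 : E)) := by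
      intro h
      exact hcon ⟨congrArg Prod.fst h, congrArg Prod.snd h⟩
    exact absurd (hposR d hne) (not_lt.mpr hle)
  -- expansion of the functional along a real line
  have hFexpR : ∀ (z₀ : E) (x d : H) (t : ℝ),
      (⟪JK (T (x + (t : ℂ) • d)), T (x + (t : ℂ) • d)⟫).re
        + ρ * (⟪JE (V (x + (t : ℂ) • d) - z₀), V (x + (t : ℂ) • d) - z₀⟫).re
      = ((⟪JK (T x), T x⟫).re + ρ * (⟪JE (V x - z₀), V x - z₀⟫).re)
        + 2 * t * ((⟪JK (T d), T x⟫).re + ρ * (⟪JE (V d), V x - z₀⟫).re)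
        + t ^ 2 * q d := by
    intro z₀ x d t
    have hT1 : T (x + (t : ℂ) • d) = T x + (t : ℂ) • T d := by
      rw [map_add, map_smul]
    have hV1 : V (x + (t : ℂ) • d) - z₀ = (V x - z₀) + (t : ℂ) • V d := by
      rw [map_add, map_smul]; abel
    rw [hT1, hV1, auxExpand JK hJKsa (T x) (T d) ((t : ℝ) : ℂ),
      auxExpand JE hJEsa (V x - z₀) (V d) ((t : ℝ) : ℂ)]
    have hre : ∀ w : ℂ, ((starRingEnd ℂ) ((t : ℝ) : ℂ) * w).re = t * w.re := by
      intro w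
      rw [Complex.conj_ofReal]
      simp [Complex.mul_re]
    have hns : Complex.normSq ((t : ℝ) : ℂ) = t ^ 2 := by
      rw [Complex.normSq_ofReal]; ring
    rw [hre, hre, hns, hqdef]
    ring
  clear_value q
  -- the core : every minimizer x̃ of F_ρ(·,z₀) yields sp(Vx̃) = sm(ρ,z₀)
  have core : ∀ (z₀ : E) (xt : H), xt ∈ smSet JK JE T V ρ z₀ →
      xt ∈ spSet JK T V (V xt) ∧ spSet JK T V (V xt) = smSet JK JE T V ρ z₀ := by
    intro z₀ xt hxt
    have hmin : ∀ x : H,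
        (⟪JK (T xt), T xt⟫).re + ρ * (⟪JE (V xt - z₀), V xt - z₀⟫).re ≤
          (⟪JK (T x), T x⟫).re + ρ * (⟪JE (V x - z₀), V x - z₀⟫).re := hxt
    have hsp : xt ∈ spSet JK T V (V xt) := by
      refine ⟨rfl, fun x hx => ?_⟩
      have h := hmin x
      rw [hx] at h
      linarith
    refine ⟨hsp, ?_⟩
    ext u
    constructor
    · rintro ⟨hVu, hu⟩
      intro x
      have h1 : (⟪JK (T u), T u⟫).re ≤ (⟪JK (T xt), T xt⟫).re := hu xt rfl
      have h2 := hmin x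
      have h3 : V u - z₀ = V xt - z₀ := by rw [hVu]
      rw [h3]
      linarith
    · intro hu
      have humin : ∀ x : H,
          (⟪JK (T u), T u⟫).re + ρ * (⟪JE (V u - z₀), V u - z₀⟫).re ≤
            (⟪JK (T x), T x⟫).re + ρ * (⟪JE (V x - z₀), V x - z₀⟫).re := hu
      set d : H := u - xt with hd
      clear_value d
      have hu1 : xt + ((1 : ℝ) : ℂ) • d = u := by
        rw [hd]; push_cast; rw [one_smul]; abel
      have hu2 : q d = 0 ∧ V u = V xt := by
        have e1 := hFexpR z₀ xt d 1
        rw [hu1] at e1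
        have e2 := hFexpR z₀ xt d (1 / 2)
        have h12 := hmin (xt + ((1 / 2 : ℝ) : ℂ) • d)
        rw [e2] at h12
        have heq1 := humin xt
        have heq2 := hmin u
        have hqd0 := hq0 d
        have hqd : q d = 0 := by linarith
        have hV0 : V d = 0 := (hqz d (le_of_eq hqd)).2
        refine ⟨hqd, ?_⟩
        have : V u - V xt = 0 := by rw [← map_sub, ← hd]; exact hV0
        rw [sub_eq_zero] at this
        exact this
      obtain ⟨hqd, hVu⟩ := hu2
      refine ⟨hVu, fun x hx => ?_⟩
      have h := humin x
      rw [hVu, hx] at h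
      linarith
  constructor
  · rintro z₀ ⟨xt, hxt⟩
    obtain ⟨hsp, heq⟩ := core z₀ xt hxt
    exact ⟨V xt, ⟨xt, hsp⟩, heq⟩
  · rintro w₀ ⟨xt, hxt⟩
    obtain ⟨hVxt, hmin⟩ := hxt
    -- nonnegativity of the K-form on ker V
    have hqK : ∀ d : H, V d = 0 → 0 ≤ (⟪JK (T d), T d⟫).re := by
      intro d hVd
      have h := hq0 d
      rw [hqdef] at h
      simp only [hVd, map_zero, inner_zero_left, Complex.zero_re, mul_zero, add_zero] at h
      exact h
    -- first order condition at xt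
    have hfo : ∀ d : H, V d = 0 → (⟪JK (T d), T xt⟫ : ℂ) = 0 := by
      intro d hVd
      refine auxZero _ (hqK d hVd) _ ?_
      intro c
      have hxmem : V (xt + c • d) = w₀ := by
        rw [map_add, map_smul, hVd, smul_zero, add_zero, hVxt]
      have h := hmin (xt + c • d) hxmem
      have hTe : T (xt + c • d) = T xt + c • T d := by rw [map_add, map_smul]
      rw [hTe, auxExpand JK hJKsa (T xt) (T d) c] at h
      linarith
    set ystar : H := ContinuousLinearMap.adjoint T (JK (T xt)) with hyst
    have hTst : ∀ d : H, (⟪JK (T d), T xt⟫ : ℂ) = ⟪d, ystar⟫ := by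
      intro d
      rw [hyst, ContinuousLinearMap.adjoint_inner_right]
      rw [auxSym JK hJKsa (T d) (T xt)]
      exact inner_conj_symm _ _
    have hyperp : ∀ d : H, V d = 0 → (⟪d, ystar⟫ : ℂ) = 0 := by
      intro d hVd
      rw [← hTst d]
      exact hfo d hVd
    -- construct u with V* u = ystar using the open mapping theorem
    haveI hkc : CompleteSpace (LinearMap.ker (V : H →ₗ[ℂ] E)) := (ContinuousLinearMap.isClosed_ker V).completeSpace_coe
    set Kv : Submodule ℂ H := (LinearMap.ker (V : H →ₗ[ℂ] E))ᗮ with hKvdef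
    haveI hKvc : CompleteSpace Kv := (Submodule.isClosed_orthogonal _).completeSpace_coe
    set S : Kv →L[ℂ] E := V.comp (Submodule.subtypeL Kv) with hSdef
    have hSinj : LinearMap.ker (S : Kv →ₗ[ℂ] E) = ⊥ := by
      rw [Submodule.eq_bot_iff]
      rintro ⟨x, hx⟩ hxk
      have hVx : x ∈ LinearMap.ker (V : H →ₗ[ℂ] E) := by
        have : S ⟨x, hx⟩ = 0 := hxk
        simpa [hSdef] using this
      have h0 : (⟪x, x⟫ : ℂ) = 0 :=
        (Submodule.mem_orthogonal _ _).mp hx x hVx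
      exact Subtype.ext (inner_self_eq_zero.mp h0)
    have hSsurj : LinearMap.range (S : Kv →ₗ[ℂ] E) = ⊤ := by
      rw [LinearMap.range_eq_top]
      intro e'
      obtain ⟨x, hx⟩ := hV e'
      obtain ⟨y, hy, z, hz, hyz⟩ :=
        Submodule.exists_add_mem_mem_orthogonal (K := LinearMap.ker (V : H →ₗ[ℂ] E)) (v := x)
      refine ⟨⟨z, hz⟩, ?_⟩
      have hVy : V y = 0 := hy
      have : V z = e' := by
        rw [hyz, map_add, hVy, zero_add] at hx
        exact hx
      simpa [hSdef] using this
    set eS := ContinuousLinearEquiv.ofBijective S hSinj hSsurj with heSdef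
    have heScoe : ∀ p : Kv, eS p = S p := fun p => by
      rw [heSdef, ContinuousLinearEquiv.coeFn_ofBijective]
    set B : E →L[ℂ] H := (Submodule.subtypeL Kv).comp (eS.symm : E →L[ℂ] Kv) with hBdef
    set uvec : E := ContinuousLinearMap.adjoint B ystar with huvecdef
    have hu : ∀ d : H, (⟪V d, uvec⟫ : ℂ) = ⟪d, ystar⟫ := by
      intro d
      rw [huvecdef, ContinuousLinearMap.adjoint_inner_right]
      have hp : V (B (V d)) = V d := by
        have h1 : S (eS.symm (V d)) = V d := by
          rw [← heScoe]
          exact eS.apply_symm_apply (V d)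
        simpa [hBdef, hSdef] using h1
      have h0 := hyperp (d - B (V d)) (by rw [map_sub, hp, sub_self])
      rw [inner_sub_left, sub_eq_zero] at h0
      exact h0.symm
    -- the shift z₀
    set z₀ : E := w₀ + ((ρ⁻¹ : ℝ) : ℂ) • JE uvec with hz₀def
    have hkey : ∀ d : H,
        (⟪JK (T d), T xt⟫ : ℂ) + (ρ : ℂ) * ⟪JE (V d), V xt - z₀⟫ = 0 := by
      intro d
      have hsub : V xt - z₀ = ((-ρ⁻¹ : ℝ) : ℂ) • JE uvec := by
        rw [hz₀def, hVxt]
        push_cast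
        module
      rw [hsub, inner_smul_right]
      have hJJ : (⟪JE (V d), JE uvec⟫ : ℂ) = ⟪V d, uvec⟫ := by
        rw [← ContinuousLinearMap.adjoint_inner_left JE,
          ContinuousLinearMap.isSelfAdjoint_iff'.mp hJEsa]
        have h2 : JE (JE (V d)) = V d := by
          have := ContinuousLinearMap.ext_iff.mp hJE2 (V d)
          simpa using this
        rw [h2]
      rw [hJJ, hu d, hTst d]
      have hρc : (ρ : ℂ) * ((-ρ⁻¹ : ℝ) : ℂ) = -1 := by
        have hρc0 : (ρ : ℂ) ≠ 0 := Complex.ofReal_ne_zero.mpr hρ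
        push_cast
        field_simp
      rw [← mul_assoc, hρc]
      ring
    -- xt is a global minimizer of F_ρ(·,z₀)
    have hsm : xt ∈ smSet JK JE T V ρ z₀ := by
      intro x
      have hx1 : x = xt + ((1 : ℝ) : ℂ) • (x - xt) := by
        push_cast
        rw [one_smul]
        abel
      have e1 := hFexpR z₀ xt (x - xt) 1
      have ha : (⟪JK (T (x - xt)), T xt⟫).re + ρ * (⟪JE (V (x - xt)), V xt - z₀⟫).re = 0 := by
        have h := congrArg Complex.re (hkey (x - xt))
        simpa [Complex.add_re, Complex.mul_re, Complex.ofReal_re, Complex.ofReal_im] using h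
      have hq := hq0 (x - xt)
      calc (⟪JK (T xt), T xt⟫).re + ρ * (⟪JE (V xt - z₀), V xt - z₀⟫).re
          ≤ (⟪JK (T xt), T xt⟫).re + ρ * (⟪JE (V xt - z₀), V xt - z₀⟫).re
            + 2 * 1 * ((⟪JK (T (x - xt)), T xt⟫).re + ρ * (⟪JE (V (x - xt)), V xt - z₀⟫).re)
            + 1 ^ 2 * q (x - xt) := by
            rw [ha]
            simp only [mul_zero, add_zero, one_pow, one_mul]
            linarith
        _ = (⟪JK (T (xt + ((1 : ℝ) : ℂ) • (x - xt))), T (xt + ((1 : ℝ) : ℂ) • (x - xt))⟫).re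
            + ρ * (⟪JE (V (xt + ((1 : ℝ) : ℂ) • (x - xt)) - z₀),
                V (xt + ((1 : ℝ) : ℂ) • (x - xt)) - z₀⟫).re := e1.symm
        _ = (⟪JK (T x), T x⟫).re + ρ * (⟪JE (V x - z₀), V x - z₀⟫).re := by
            rw [← hx1]
    obtain ⟨_, heq⟩ := core z₀ xt hsm
    rw [hVxt] at heq
    exact ⟨z₀, heq⟩
end
end
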